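/- arXiv:1702.03530 — 3 statements merged into one kernel-verified Lean document; each statement's English description precedes it below -/
import Mathlib

section
/- Theorem 11(i): Let C be a graphoid of CI relations on [p] and let G_π and G_τ be minimal I-MAPs with respect to C that are Markov equivalent. If G_π is MEC-s-minimal, then there exists a weakly decreasing sequence of covered arrow reversals (a sequence of minimal I-MAPs w.r.t. C whose consecutive members are connected by covered arrow reversals and whose arrow counts never increase) from G_π to G_τ. -/
open scoped Classical

namespace GSP

/-- A DAG on the node set `Fin p`, given by its finite set of arrows,
which must form an acyclic relation. -/
structure DAG (p : ℕ) where
  arrows : Finset (Fin p × Fin p)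
  acyclic : ∀ i : Fin p, ¬ Relation.TransGen (fun a b => (a, b) ∈ arrows) i i

variable {p : ℕ}

namespace DAG

/-- `a → b` is an arrow of `G`. -/
def Arrow (G : DAG p) (a b : Fin p) : Prop := (a, b) ∈ G.arrows

/-- The number of arrows of `G`, denoted `|G|`. -/
def numArrows (G : DAG p) : ℕ := G.arrows.card

/-- The set of parents of a node `j` in `G`. -/
noncomputable def parents (G : DAG p) (j : Fin p) : Finset (Fin p) :=
  Finset.univ.filter fun i => G.Arrow i j

/-- Adjacency: `a` and `b` are joined by an arrow in some direction. -/
def Adj (G : DAG p) (a b : Fin p) : Prop := G.Arrow a b ∨ G.Arrow b a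

/-- `b` is a collider between `a` and `c`: both arrows point into `b`. -/
def Collider (G : DAG p) (a b c : Fin p) : Prop := G.Arrow a b ∧ G.Arrow c b

/-- `d` is a (reflexive) descendant of `a` in `G`. -/
def Desc (G : DAG p) (a d : Fin p) : Prop := Relation.ReflTransGen G.Arrow a d

/-- The list of nodes `l` is a d-connecting walk given `S`: consecutive nodes
are adjacent, every internal collider lies in `S` or has a descendant in `S`,
and no internal non-collider lies in `S`. -/
def DConnWalk (G : DAG p) (S : Finset (Fin p)) (l : List (Fin p)) : Prop :=
  l.Chain' G.Adj ∧
  ∀ (m : ℕ) (_ : 1 ≤ m) (h2 : m + 1 < l.length),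
    (G.Collider (l.get ⟨m - 1, by omega⟩) (l.get ⟨m, by omega⟩) (l.get ⟨m + 1, h2⟩) →
      ∃ d ∈ S, G.Desc (l.get ⟨m, by omega⟩) d) ∧
    (¬ G.Collider (l.get ⟨m - 1, by omega⟩) (l.get ⟨m, by omega⟩) (l.get ⟨m + 1, h2⟩) →
      l.get ⟨m, by omega⟩ ∉ S)

/-- `i` and `j` are d-connected given `S` in `G`. -/
def DConn (G : DAG p) (i j : Fin p) (S : Finset (Fin p)) : Prop :=
  ∃ l : List (Fin p), l.head? = some i ∧ l.getLast? = some j ∧ G.DConnWalk S l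

/-- `i` and `j` are d-separated given `S` in `G`. -/
def DSep (G : DAG p) (i j : Fin p) (S : Finset (Fin p)) : Prop := ¬ G.DConn i j S

end DAG

/-- A conditional independence (CI) relation `i ⊥ j | S` on `[p]`. -/
abbrev CIRel (p : ℕ) := Fin p × Fin p × Finset (Fin p)

/-- The set of CI relations encoded by the d-separations of `G`. -/
def CIof (G : DAG p) : Set (CIRel p) :=
  {t | t.1 ≠ t.2.1 ∧ t.1 ∉ t.2.2 ∧ t.2.1 ∉ t.2.2 ∧ G.DSep t.1 t.2.1 t.2.2}

/-- The symmetric closure of a set of CI relations. -/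
def symClosure (C : Set (CIRel p)) : Set (CIRel p) :=
  {t | t ∈ C ∨ (t.2.1, t.1, t.2.2) ∈ C}

/-- Symmetry of a set of CI relations. -/
def SymmetricCI (C : Set (CIRel p)) : Prop :=
  ∀ i j S, (i, j, S) ∈ C → (j, i, S) ∈ C

/-- A semigraphoid: symmetric and satisfying (SG2). -/
def Semigraphoid (C : Set (CIRel p)) : Prop :=
  SymmetricCI C ∧
  ∀ i j k S, (i, j, S) ∈ C → (i, k, insert j S) ∈ C →
    (i, k, S) ∈ C ∧ (i, j, insert k S) ∈ C

/-- A graphoid: a semigraphoid additionally satisfying intersection (INT). -/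
def Graphoid (C : Set (CIRel p)) : Prop :=
  Semigraphoid C ∧
  ∀ i j k S, (i, j, insert k S) ∈ C → (i, k, insert j S) ∈ C →
    (i, j, S) ∈ C ∧ (i, k, S) ∈ C

/-- Build a DAG from a relation compatible with a numeric ordering. -/
noncomputable def mkDAG (R : Fin p → Fin p → Prop) (f : Fin p → ℕ)
    (hf : ∀ a b, R a b → f a < f b) : DAG p where
  arrows := Finset.univ.filter fun e : Fin p × Fin p => R e.1 e.2
  acyclic := by
    intro i hi
    have key : ∀ a b : Fin p,
        Relation.TransGen (fun a b : Fin p =>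
          (a, b) ∈ Finset.univ.filter fun e : Fin p × Fin p => R e.1 e.2) a b →
        f a < f b := by
      intro a b h
      induction h with
      | single h => exact hf _ _ (by simpa using h)
      | tail _ h ih => exact lt_trans ih (hf _ _ (by simpa using h))
    exact lt_irrefl _ (key i i hi)

/-- The conditioning set `{π_1, …, π_j} \ {π_i, π_j}` (where `b = π_j` is the
later node and `a = π_i` the earlier one) used in the definition of minimal
I-MAPs. -/
noncomputable def condSet (π : Equiv.Perm (Fin p)) (a b : Fin p) : Finset (Fin p) :=
  ((Finset.univ.filter fun k : Fin p => π.symm k ≤ π.symm b).erase a).erase b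

/-- The minimal I-MAP `G_π` of a set `C` of CI relations with respect to the
permutation (ordering) `π`: there is an arrow `π_i → π_j` for positions `i < j`
iff `π_i ⊥ π_j | {π_1, …, π_j} \ {π_i, π_j}` is not in `C`. -/
noncomputable def minimalIMAP (C : Set (CIRel p)) (π : Equiv.Perm (Fin p)) : DAG p :=
  mkDAG (fun a b => π.symm a < π.symm b ∧ (a, b, condSet π a b) ∉ C)
    (fun a => (π.symm a : ℕ)) (fun a b h => by exact_mod_cast h.1)

/-- Markov equivalence of DAGs: equal sets of d-separation statements. -/
def MarkovEquiv (G H : DAG p) : Prop := CIof G = CIof H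

/-- `H` is an independence map of `G`, written `G ≤ H`: `CI(H) ⊆ CI(G)`. -/
def IMapLE (G H : DAG p) : Prop := CIof H ⊆ CIof G

/-- `π` is a linear extension of `G`: every arrow goes from an earlier to a
later element of `π`. -/
def IsLinExt (G : DAG p) (π : Equiv.Perm (Fin p)) : Prop :=
  ∀ a b, G.Arrow a b → π.symm a < π.symm b

/-- `a → b` is a covered arrow of `G`: `pa(a) = pa(b) \ {a}`. -/
def DAG.Covered (G : DAG p) (a b : Fin p) : Prop :=
  G.Arrow a b ∧ G.parents a = (G.parents b).erase a

/-- The minimal I-MAPs `G_σ` and `G_ρ` are connected by a covered arrow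
reversal: `ρ` is a linear extension of the DAG obtained from `G_σ` by
reversing one covered arrow of `G_σ`. -/
def CoveredReversalStep (C : Set (CIRel p)) (σ ρ : Equiv.Perm (Fin p)) : Prop :=
  ∃ a b : Fin p, (minimalIMAP C σ).Covered a b ∧
    ρ.symm b < ρ.symm a ∧
    ∀ x y : Fin p, (minimalIMAP C σ).Arrow x y → (x, y) ≠ (a, b) →
      ρ.symm x < ρ.symm y

/-- A weakly decreasing sequence of covered arrow reversals: a sequence of
minimal I-MAPs in which consecutive members are connected by covered arrow
reversals and the number of arrows never increases. -/
def WeaklyDecreasingSeq (C : Set (CIRel p)) (s : List (Equiv.Perm (Fin p))) : Prop :=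
  s.Chain' fun σ ρ => CoveredReversalStep C σ ρ ∧
    (minimalIMAP C ρ).numArrows ≤ (minimalIMAP C σ).numArrows

/-- Some weakly decreasing sequence of covered arrow reversals starting at
`G_π` reaches a minimal I-MAP with strictly fewer arrows. -/
def EscapesByCoveredReversals (C : Set (CIRel p)) (π : Equiv.Perm (Fin p)) : Prop :=
  ∃ (s : List (Equiv.Perm (Fin p))) (τ : Equiv.Perm (Fin p)),
    s.head? = some π ∧ s.getLast? = some τ ∧ WeaklyDecreasingSeq C s ∧
    (minimalIMAP C τ).numArrows < (minimalIMAP C π).numArrows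

/-- The TSP assumption of `C` with respect to `G`. -/
def TSP (C : Set (CIRel p)) (G : DAG p) : Prop :=
  CIof G ⊆ C ∧
  ∀ π : Equiv.Perm (Fin p), ¬ EscapesByCoveredReversals C π →
    MarkovEquiv (minimalIMAP C π) G

/-- The SMR assumption of `C` with respect to `G`. -/
def SMR (C : Set (CIRel p)) (G : DAG p) : Prop :=
  CIof G ⊆ C ∧
  ∀ H : DAG p, CIof H ⊆ C → ¬ MarkovEquiv H G → G.numArrows < H.numArrows

end GSP

namespace GSP

variable {p : ℕ}

/-- The minimal I-MAP `G_π` is MEC-minimal with respect to `C`: for every DAG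
`G` Markov equivalent to `G_π` and every linear extension `τ` of `G`, one has
`G_π ≤ G_τ`. -/
def MECMinimal (C : Set (CIRel p)) (π : Equiv.Perm (Fin p)) : Prop :=
  ∀ G : DAG p, MarkovEquiv G (minimalIMAP C π) →
    ∀ τ : Equiv.Perm (Fin p), IsLinExt G τ →
      IMapLE (minimalIMAP C π) (minimalIMAP C τ)

/-- The minimal I-MAP `G_π` is MEC-s-minimal with respect to `C`: it is
MEC-minimal and moreover its skeleton is contained in the skeleton of `G_τ`
for all such `G` and `τ`. -/
def MECsMinimal (C : Set (CIRel p)) (π : Equiv.Perm (Fin p)) : Prop :=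
  MECMinimal C π ∧
  ∀ G : DAG p, MarkovEquiv G (minimalIMAP C π) →
    ∀ τ : Equiv.Perm (Fin p), IsLinExt G τ →
      ∀ a b : Fin p, (minimalIMAP C π).Adj a b → (minimalIMAP C τ).Adj a b

section Infra
variable {p : ℕ}

theorem DAG.ext' {G H : DAG p} (h : G.arrows = H.arrows) : G = H := by
  cases G; cases H; simpa using h

namespace DAG

theorem arrow_irrefl (G : DAG p) (a : Fin p) : ¬ G.Arrow a a :=
  fun h => G.acyclic a (Relation.TransGen.single h)

theorem arrow_asymm {G : DAG p} {a b : Fin p} (h : G.Arrow a b) : ¬ G.Arrow b a :=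
  fun h' => G.acyclic a (Relation.TransGen.head h (Relation.TransGen.single h'))

theorem Adj.symm {G : DAG p} {a b : Fin p} (h : G.Adj a b) : G.Adj b a := h.elim Or.inr Or.inl

theorem Arrow.adj {G : DAG p} {a b : Fin p} (h : G.Arrow a b) : G.Adj a b := Or.inl h

theorem adj_irrefl (G : DAG p) (a : Fin p) : ¬ G.Adj a a := by
  rintro (h | h) <;> exact arrow_irrefl G a h

theorem Desc.refl {G : DAG p} (a : Fin p) : G.Desc a a := Relation.ReflTransGen.refl

theorem mem_parents {G : DAG p} {a b : Fin p} : a ∈ G.parents b ↔ G.Arrow a b := by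
  simp [parents]

/-- positions along a linear extension are monotone along descendant paths -/
theorem isLinExt_desc_le {G : DAG p} {ρ : Equiv.Perm (Fin p)} (h : IsLinExt G ρ)
    {a b : Fin p} (hd : G.Desc a b) : ρ.symm a ≤ ρ.symm b := by
  induction hd with
  | refl => exact le_refl _
  | tail _ h' ih => exact le_of_lt (lt_of_le_of_lt ih (h _ _ h'))

theorem isLinExt_desc_eq {G : DAG p} {ρ : Equiv.Perm (Fin p)} (h : IsLinExt G ρ)
    {a b : Fin p} (hd : G.Desc a b) (hle : ρ.symm b ≤ ρ.symm a) : a = b := by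
  cases hd.cases_head with
  | inl h' => exact h'
  | inr h' =>
    obtain ⟨c, hac, hcb⟩ := h'
    exact absurd (lt_of_lt_of_le (h _ _ hac) (isLinExt_desc_le h hcb)) (not_lt.mpr hle)

end DAG

section MI

theorem mem_minimalIMAP {C : Set (CIRel p)} {π : Equiv.Perm (Fin p)} {a b : Fin p} :
    (minimalIMAP C π).Arrow a b ↔
      (π.symm a < π.symm b ∧ (a, b, condSet π a b) ∉ C) := by
  simp [minimalIMAP, mkDAG, DAG.Arrow]

theorem isLinExt_minimalIMAP (C : Set (CIRel p)) (π : Equiv.Perm (Fin p)) :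
    IsLinExt (minimalIMAP C π) π := fun a b h => (mem_minimalIMAP.mp h).1

theorem mem_condSet {π : Equiv.Perm (Fin p)} {a b k : Fin p} :
    k ∈ condSet π a b ↔ (k ≠ b ∧ k ≠ a ∧ π.symm k ≤ π.symm b) := by
  simp [condSet, and_assoc]

/-- `minimalIMAP` only depends on the position function. -/
theorem minimalIMAP_congr {C : Set (CIRel p)} {π σ : Equiv.Perm (Fin p)}
    (h : π.symm = σ.symm) : minimalIMAP C π = minimalIMAP C σ := by
  have hc : condSet π = condSet σ := by
    funext a b; simp [condSet, h]
  apply DAG.ext'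
  ext ⟨a, b⟩
  change (minimalIMAP C π).Arrow a b ↔ (minimalIMAP C σ).Arrow a b
  rw [mem_minimalIMAP, mem_minimalIMAP, h, hc]

end MI

namespace DAG

/-- Left-anchored active-walk predicate. `AW G S co x y f` says: there is a walk
(with at least one edge) from `x` to `y` in the skeleton of `G` such that every
internal collider `c` satisfies `co c`, every internal non-collider is outside `S`,
and `f = true` iff the first edge of the walk points out of `x`. -/
inductive AW (G : DAG p) (S : Finset (Fin p)) (co : Fin p → Prop) : Fin p → Fin p → Bool → Prop
  | single {a y : Fin p} (h : G.Arrow a y) : AW G S co a y true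
  | single' {a y : Fin p} (h : G.Arrow y a) : AW G S co a y false
  | headOut {a b y : Fin p} {f : Bool} (e : G.Arrow b a) (hb : b ∉ S)
      (hw : AW G S co b y f) : AW G S co a y false
  | headIn {a b y : Fin p} (e : G.Arrow a b) (hb : b ∉ S)
      (hw : AW G S co b y true) : AW G S co a y true
  | headColl {a b y : Fin p} (e : G.Arrow a b) (hb : co b)
      (hw : AW G S co b y false) : AW G S co a y true

theorem AW.mono {G : DAG p} {S : Finset (Fin p)} {co co' : Fin p → Prop}
    (hco : ∀ c, co c → co' c) {x y : Fin p} {f : Bool}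
    (h : AW G S co x y f) : AW G S co' x y f := by
  induction h with
  | single h => exact .single h
  | single' h => exact .single' h
  | headOut e hb _ ih => exact .headOut e hb ih
  | headIn e hb _ ih => exact .headIn e hb ih
  | headColl e hb _ ih => exact .headColl e (hco _ hb) ih

/-- In a walk whose colliders are required to lie in `S`, a collider whose condition
is only "has a descendant in `S`" can be fixed by a detour down to `S` and back. -/
theorem AW.detour {G : DAG p} {S : Finset (Fin p)} {y d z : Fin p}
    (hdesc : G.Desc z d) (hd : d ∈ S) :
    AW G S (· ∈ S) z y false → z ∉ S → AW G S (· ∈ S) z y true := by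
  induction hdesc using Relation.ReflTransGen.head_induction_on with
  | refl => exact fun _ hz => absurd hd hz
  | head h _ ih =>
    rename_i z' c _
    intro hw hz
    by_cases hc : c ∈ S
    · exact .headColl h hc (.headOut h hz hw)
    · exact .headIn h hc (ih (.headOut h hz hw) hc)

/-- Normalization: walks with the descendant-collider condition can be turned into
walks all of whose colliders lie in `S`. -/
theorem AW.norm {G : DAG p} {S : Finset (Fin p)} {x y : Fin p} {f : Bool}
    (h : AW G S (fun c => ∃ d ∈ S, G.Desc c d) x y f) : AW G S (· ∈ S) x y f := by
  induction h with
  | single h => exact .single h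
  | single' h => exact .single' h
  | headOut e hb _ ih => exact .headOut e hb ih
  | headIn e hb _ ih => exact .headIn e hb ih
  | headColl e hb ih ih' =>
    obtain ⟨d, hd, hdesc⟩ := hb
    rename_i a b y
    by_cases hbS : b ∈ S
    · exact .headColl e hbS ih'
    · exact .headIn e hbS (AW.detour hdesc hd ih' hbS)

theorem AW.toDesc {G : DAG p} {S : Finset (Fin p)} {x y : Fin p} {f : Bool}
    (h : AW G S (· ∈ S) x y f) : AW G S (fun c => ∃ d ∈ S, G.Desc c d) x y f :=
  h.mono fun c hc => ⟨c, hc, Relation.ReflTransGen.refl⟩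

end DAG
end Infra
section WalkEquiv
variable {p : ℕ}

namespace DAG

/-- Triple condition at internal nodes of a walk. -/
def Ok (G : DAG p) (S : Finset (Fin p)) (a b c : Fin p) : Prop :=
  (G.Collider a b c → ∃ d ∈ S, G.Desc b d) ∧ (¬ G.Collider a b c → b ∉ S)

/-- All consecutive triples of a list satisfy `P`. -/
def Trip {α : Type*} (P : α → α → α → Prop) (l : List α) : Prop :=
  ∀ i a b c, l[i]? = some a → l[i+1]? = some b → l[i+2]? = some c → P a b c

theorem Trip.imp {α : Type*} {P Q : α → α → α → Prop} (h : ∀ a b c, P a b c → Q a b c)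
    {l : List α} (ht : Trip P l) : Trip Q l :=
  fun i a b c ha hb hc => h a b c (ht i a b c ha hb hc)

theorem trip_of_short {α : Type*} {P : α → α → α → Prop} {l : List α}
    (h : l.length ≤ 2) : Trip P l := by
  intro i a b c _ _ hc
  obtain ⟨hlt, -⟩ := List.getElem?_eq_some_iff.mp hc
  omega

theorem trip_cons_iff {α : Type*} {P : α → α → α → Prop} {a b c : α} {t : List α} :
    Trip P (a :: b :: c :: t) ↔ P a b c ∧ Trip P (b :: c :: t) := by
  constructor
  · intro h
    refine ⟨h 0 a b c (by simp) (by simp) (by simp), ?_⟩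
    intro i x y z hx hy hz
    exact h (i+1) x y z (by simpa using hx) (by simpa using hy) (by simpa using hz)
  · rintro ⟨hP, h⟩ i x y z hx hy hz
    match i with
    | 0 =>
      simp only [List.getElem?_cons_succ, List.getElem?_cons_zero, Option.some.injEq] at hx hy hz
      subst hx; subst hy; subst hz; exact hP
    | (i+1) =>
      exact h i x y z (by simpa using hx) (by simpa using hy) (by simpa using hz)

theorem trip_cons_of {α : Type*} {P : α → α → α → Prop} {a b : α} {t : List α}
    (hP : ∀ c t', t = c :: t' → P a b c) (h : Trip P (b :: t)) : Trip P (a :: b :: t) := by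
  match t with
  | [] => exact trip_of_short (by simp)
  | c :: t' => exact trip_cons_iff.mpr ⟨hP c t' rfl, h⟩

theorem trip_reverse {α : Type*} {P : α → α → α → Prop} {l : List α}
    (h : Trip P l) : Trip (fun a b c => P c b a) l.reverse := by
  intro i a b c ha hb hc
  obtain ⟨hlt, -⟩ := List.getElem?_eq_some_iff.mp hc
  rw [List.length_reverse] at hlt
  rw [List.getElem?_reverse (by omega)] at ha hb hc
  have e1 : l.length - 1 - (i+2) + 1 = l.length - 1 - (i+1) := by omega
  have e2 : l.length - 1 - (i+2) + 2 = l.length - 1 - i := by omega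
  exact h (l.length - 1 - (i+2)) c b a hc (by rw [e1]; exact hb) (by rw [e2]; exact ha)

theorem collider_symm {G : DAG p} {a b c : Fin p} (h : G.Collider a b c) :
    G.Collider c b a := ⟨h.2, h.1⟩

theorem ok_symm {G : DAG p} {S : Finset (Fin p)} {a b c : Fin p} (h : G.Ok S a b c) :
    G.Ok S c b a :=
  ⟨fun hc => h.1 (collider_symm hc), fun hc => h.2 (fun hc' => hc (collider_symm hc'))⟩

/-- The index-based walk condition in terms of `Trip`. -/
theorem dConnWalk_iff {G : DAG p} {S : Finset (Fin p)} {l : List (Fin p)} :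
    G.DConnWalk S l ↔ l.Chain' G.Adj ∧ Trip (G.Ok S) l := by
  unfold DConnWalk
  simp only [List.get_eq_getElem]
  constructor
  · rintro ⟨hch, h⟩
    refine ⟨hch, ?_⟩
    intro i a b c ha hb hc
    obtain ⟨h3, hc⟩ := List.getElem?_eq_some_iff.mp hc
    obtain ⟨h1, ha⟩ := List.getElem?_eq_some_iff.mp ha
    obtain ⟨h2, hb⟩ := List.getElem?_eq_some_iff.mp hb
    have := h (i+1) (by omega) (by omega)
    subst ha hb hc
    exact this
  · rintro ⟨hch, h⟩
    refine ⟨hch, ?_⟩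
    intro m hm h2
    have e1 : m - 1 + 1 = m := by omega
    have e2 : m - 1 + 2 = m + 1 := by omega
    exact h (m-1) _ _ _ (List.getElem?_eq_getElem (by omega))
      (by rw [e1]; exact List.getElem?_eq_getElem (by omega))
      (by rw [e2]; exact List.getElem?_eq_getElem h2)

theorem DConnWalk.reverse {G : DAG p} {S : Finset (Fin p)} {l : List (Fin p)}
    (h : G.DConnWalk S l) : G.DConnWalk S l.reverse := by
  rw [dConnWalk_iff] at h ⊢
  refine ⟨?_, (trip_reverse h.2).imp (fun a b c h => ok_symm h)⟩
  show List.IsChain _ _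
  rw [List.isChain_reverse]
  exact List.IsChain.imp (fun a b h => DAG.Adj.symm h) h.1

theorem DConn.symm {G : DAG p} {S : Finset (Fin p)} {x y : Fin p}
    (h : G.DConn x y S) : G.DConn y x S := by
  obtain ⟨l, h1, h2, h3⟩ := h
  exact ⟨l.reverse, by rw [List.head?_reverse]; exact h2,
    by rw [List.getLast?_reverse]; exact h1, h3.reverse⟩

/-- descendant-collider condition -/
def dco (G : DAG p) (S : Finset (Fin p)) : Fin p → Prop := fun c => ∃ d ∈ S, G.Desc c d

theorem AW.dconn {G : DAG p} {S : Finset (Fin p)} {x y : Fin p} {f : Bool}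
    (h : AW G S (G.dco S) x y f) : G.DConn x y S := by
  suffices H : ∃ l b t, l = x :: b :: t ∧ l.getLast? = some y ∧ l.Chain' G.Adj ∧
      Trip (G.Ok S) l ∧ (f = true ↔ G.Arrow x b) by
    obtain ⟨l, b, t, rfl, hl, hch, ht, -⟩ := H
    exact ⟨x :: b :: t, rfl, hl, dConnWalk_iff.mpr ⟨hch, ht⟩⟩
  induction h with
  | @single a y h =>
    exact ⟨[a, y], y, [], rfl, rfl, by simp [List.Chain', List.isChain_pair, h.adj], trip_of_short (by simp), by simp [h]⟩
  | @single' a y h =>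
    exact ⟨[a, y], y, [], rfl, rfl, by simp [List.Chain', List.isChain_pair, h.adj.symm], trip_of_short (by simp),
      by simp [arrow_asymm h]⟩
  | @headOut a b y f e hb hw ih =>
    obtain ⟨l, b', t, rfl, hl, hch, ht, hf⟩ := ih
    refine ⟨a :: b :: b' :: t, b, b' :: t, rfl, by simpa using hl, ?_, ?_, ?_⟩
    · exact List.IsChain.cons_cons e.adj.symm hch
    · refine trip_cons_iff.mpr ⟨?_, ht⟩
      have hnc : ¬ G.Collider a b b' := fun hc => arrow_asymm e hc.1
      exact ⟨fun hc => absurd hc hnc, fun _ => hb⟩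
    · simp [fun h => arrow_asymm e h]
  | @headIn a b y e hb hw ih =>
    obtain ⟨l, b', t, rfl, hl, hch, ht, hf⟩ := ih
    refine ⟨a :: b :: b' :: t, b, b' :: t, rfl, by simpa using hl, ?_, ?_, by simp [e]⟩
    · exact List.IsChain.cons_cons e.adj hch
    · refine trip_cons_iff.mpr ⟨?_, ht⟩
      have hnc : ¬ G.Collider a b b' := fun hc => arrow_asymm (hf.mp rfl) hc.2
      exact ⟨fun hc => absurd hc hnc, fun _ => hb⟩
  | @headColl a b y e hb hw ih =>
    obtain ⟨l, b', t, rfl, hl, hch, ht, hf⟩ := ih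
    refine ⟨a :: b :: b' :: t, b, b' :: t, rfl, by simpa using hl, ?_, ?_, by simp [e]⟩
    · exact List.IsChain.cons_cons e.adj hch
    · refine trip_cons_iff.mpr ⟨?_, ht⟩
      have hcol : G.Collider a b b' := by
        refine ⟨e, ?_⟩
        rcases List.isChain_cons_cons.mp hch with ⟨hadj, -⟩
        rcases hadj with h' | h'
        · exact absurd (hf.mpr h') (by simp)
        · exact h'
      exact ⟨fun _ => hb, fun hnc => absurd hcol hnc⟩

theorem dconn_to_aw {G : DAG p} {S : Finset (Fin p)} {x y : Fin p}
    (hxy : x ≠ y) (h : G.DConn x y S) : ∃ f, AW G S (G.dco S) x y f := by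
  obtain ⟨l, h1, h2, h3⟩ := h
  rw [dConnWalk_iff] at h3
  match l, h1 with
  | [x], rfl =>
    simp only [List.getLast?_singleton, Option.some.injEq] at h2
    exact absurd h2 hxy
  | (x :: b :: t), rfl =>
    clear hxy
    suffices H : ∀ t b x, (x :: b :: t).Chain' G.Adj → Trip (G.Ok S) (x :: b :: t) →
        (x :: b :: t).getLast? = some y →
        ∃ f, AW G S (G.dco S) x y f ∧ (f = true ↔ G.Arrow x b) by
      obtain ⟨f, hf, -⟩ := H t b x h3.1 h3.2 h2
      exact ⟨f, hf⟩
    clear h2 h3 b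
    intro t
    induction t with
    | nil =>
      intro b x hch ht hl
      simp only [List.getLast?_cons_cons, List.getLast?_singleton, Option.some.injEq] at hl
      subst hl
      rcases List.isChain_cons_cons.mp hch with ⟨hadj, -⟩
      rcases hadj with h' | h'
      · exact ⟨true, .single h', by simp [h']⟩
      · exact ⟨false, .single' h', by simp [arrow_asymm h']⟩
    | cons c t' ih =>
      intro b x hch ht hl
      rcases List.isChain_cons_cons.mp hch with ⟨hadj, hch'⟩
      obtain ⟨f', hw', hf'⟩ := ih c b hch' (trip_cons_iff.mp ht).2
        (by simpa using hl)
      have hok : G.Ok S x b c := (trip_cons_iff.mp ht).1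
      rcases hadj with hxb | hbx
      · cases f' with
        | true =>
          have hnc : ¬ G.Collider x b c := fun hc => arrow_asymm (hf'.mp rfl) hc.2
          exact ⟨true, .headIn hxb (hok.2 hnc) hw', by simp [hxb]⟩
        | false =>
          have hcb : G.Arrow c b := by
            rcases List.isChain_cons_cons.mp hch' with ⟨hadj', -⟩
            rcases hadj' with h' | h'
            · exact absurd (hf'.mpr h') (by simp)
            · exact h'
          have hcol : G.Collider x b c := ⟨hxb, hcb⟩
          exact ⟨true, .headColl hxb (hok.1 hcol) hw', by simp [hxb]⟩
      · have hnc : ¬ G.Collider x b c := fun hc => arrow_asymm hbx hc.1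
        exact ⟨false, .headOut hbx (hok.2 hnc) hw', by simp [arrow_asymm hbx]⟩

theorem dconn_iff_aw {G : DAG p} {S : Finset (Fin p)} {x y : Fin p} (hxy : x ≠ y) :
    G.DConn x y S ↔ ∃ f, AW G S (G.dco S) x y f :=
  ⟨dconn_to_aw hxy, fun ⟨_, h⟩ => h.dconn⟩

end DAG
end WalkEquiv
section Markov
variable {p : ℕ}

namespace DAG

theorem transGen_lt {H : DAG p} {ρ : Equiv.Perm (Fin p)} (hlin : IsLinExt H ρ)
    {a b : Fin p} (h : Relation.TransGen H.Arrow a b) : ρ.symm a < ρ.symm b := by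
  induction h with
  | single h => exact hlin _ _ h
  | tail _ h ih => exact lt_trans ih (hlin _ _ h)

/-- Ordered (pairwise) Markov property: in a DAG `H` with linear extension `ρ`,
two nonadjacent nodes are d-separated given the predecessors of the later one. -/
theorem dsep_condSet {H : DAG p} {ρ : Equiv.Perm (Fin p)} (hlin : IsLinExt H ρ)
    {x y : Fin p} (hxy : x ≠ y) (hpos : ρ.symm x < ρ.symm y)
    (hnadj : ¬ H.Adj x y) : H.DSep x y (condSet ρ x y) := by
  set S := condSet ρ x y with hS
  have hyS : y ∉ S := by simp [hS, mem_condSet]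
  intro hconn
  obtain ⟨f, hw⟩ := dconn_to_aw (Ne.symm hxy) hconn.symm
  -- claim: no active walk from a strict descendant of `y` to `x` with first edge out
  have claim : ∀ b x' f', AW H S (H.dco S) b x' f' → ρ.symm x' < ρ.symm y →
      Relation.TransGen H.Arrow y b → f' = true → False := by
    intro b x' f' hw'
    induction hw' with
    | single h =>
      intro hpos' ht _
      have h1 := transGen_lt hlin ht
      have h2 := hlin _ _ h
      omega
    | single' h => intro _ _ hf; simp at hf
    | headOut e hb hw ih => intro _ _ hf; simp at hf
    | headIn e hb hw ih =>
      intro hpos' ht _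
      exact ih hpos' (ht.tail e) rfl
    | headColl e hco hw ih =>
      intro hpos' ht _
      obtain ⟨d, hd, hdesc⟩ := hco
      have h1 : ρ.symm y < ρ.symm d := by
        have h2 := transGen_lt hlin ht
        have h3 := hlin _ _ e
        have h4 := isLinExt_desc_le hlin hdesc
        omega
      have h2 : ρ.symm d ≤ ρ.symm y := (mem_condSet.mp hd).2.2
      omega
  -- now refute the top-level walk
  cases hw with
  | single h => exact hnadj h.adj.symm
  | single' h => exact hnadj h.adj
  | @headOut _ b _ f e hb hw =>
    by_cases hbx : b = x
    · subst hbx; exact hnadj (Or.inl e)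
    · refine hb (mem_condSet.mpr ⟨?_, hbx, le_of_lt (hlin _ _ e)⟩)
      intro hby; subst hby; exact arrow_irrefl H _ e
  | @headIn _ b _ e hb hw =>
    exact claim b x true hw hpos (Relation.TransGen.single e) rfl
  | @headColl _ b _ e hco hw =>
    obtain ⟨d, hd, hdesc⟩ := hco
    have h1 : ρ.symm y < ρ.symm d :=
      lt_of_lt_of_le (hlin _ _ e) (isLinExt_desc_le hlin hdesc)
    have h2 : ρ.symm d ≤ ρ.symm y := (mem_condSet.mp hd).2.2
    omega

theorem Adj.dconn {G : DAG p} {x y : Fin p} (h : G.Adj x y) (S : Finset (Fin p)) :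
    G.DConn x y S :=
  ⟨[x, y], rfl, rfl, dConnWalk_iff.mpr ⟨by simp [List.Chain', List.isChain_pair, h], trip_of_short (by simp)⟩⟩

theorem dconn_collider {G : DAG p} {S : Finset (Fin p)} {a b c : Fin p}
    (hab : G.Arrow a b) (hcb : G.Arrow c b) (hbS : b ∈ S) : G.DConn a c S := by
  refine ⟨[a, b, c], rfl, rfl, dConnWalk_iff.mpr ⟨by simp [List.Chain', List.isChain_cons_cons, List.isChain_pair, hab.adj, hcb.adj.symm], ?_⟩⟩
  refine trip_cons_iff.mpr ⟨⟨fun _ => ⟨b, hbS, Relation.ReflTransGen.refl⟩,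
    fun hnc => absurd ⟨hab, hcb⟩ hnc⟩, trip_of_short (by simp)⟩

end DAG

/-- Markov equivalent DAGs have the same skeleton. -/
theorem adj_of_ME {G H : DAG p} (hme : MarkovEquiv G H) {ρ : Equiv.Perm (Fin p)}
    (hlin : IsLinExt H ρ) {x y : Fin p} (hadj : G.Adj x y) (hxy : x ≠ y) : H.Adj x y := by
  have key : ∀ u v : Fin p, u ≠ v → ρ.symm u < ρ.symm v → G.Adj u v → H.Adj u v := by
    intro u v huv hpos hadj'
    by_contra hn
    have hsep := DAG.dsep_condSet hlin huv hpos hn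
    have hmem : (u, v, condSet ρ u v) ∈ CIof H :=
      ⟨huv, by simp [mem_condSet], by simp [mem_condSet], hsep⟩
    rw [← hme] at hmem
    exact hmem.2.2.2 (hadj'.dconn _)
  rcases lt_or_gt_of_ne (fun h => hxy (ρ.symm.injective h)) with h | h
  · exact key x y hxy h hadj
  · exact (key y x (Ne.symm hxy) h hadj.symm).symm

/-- Markov equivalent DAGs have the same v-structures. -/
theorem vstructure_of_ME {G H : DAG p} (hme : MarkovEquiv G H)
    {ρG ρH : Equiv.Perm (Fin p)} (hlinG : IsLinExt G ρG) (hlinH : IsLinExt H ρH)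
    {a b c : Fin p} (hab : G.Arrow a b) (hcb : G.Arrow c b) (hac : a ≠ c)
    (hnadj : ¬ G.Adj a c) : H.Arrow a b ∧ H.Arrow c b := by
  have hme' : MarkovEquiv H G := hme.symm
  have key : ∀ u w : Fin p, u ≠ w → ρH.symm u < ρH.symm w → G.Arrow u b → G.Arrow w b →
      ¬ G.Adj u w → H.Arrow u b ∧ H.Arrow w b := by
    intro u w huw hpos hub hwb hnuw
    have hub' : u ≠ b := fun h => DAG.arrow_irrefl G b (h ▸ hub)
    have hwb' : w ≠ b := fun h => DAG.arrow_irrefl G b (h ▸ hwb)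
    have hadjub : H.Adj u b := adj_of_ME hme hlinH hub.adj hub'
    have hadjwb : H.Adj w b := adj_of_ME hme hlinH hwb.adj hwb'
    by_contra hn
    -- in H, b is before w (hence strictly before the later node w)
    have hblt : ρH.symm b < ρH.symm w := by
      rcases hadjub with h1 | h1
      · rcases hadjwb with h2 | h2
        · exact absurd ⟨h1, h2⟩ hn
        · exact hlinH _ _ h2
      · exact lt_trans (hlinH _ _ h1) hpos
    have hnadjH : ¬ H.Adj u w := fun h => hnuw (adj_of_ME hme' hlinG h huw)
    have hsep := DAG.dsep_condSet hlinH huw hpos hnadjH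
    have hmem : (u, w, condSet ρH u w) ∈ CIof H :=
      ⟨huw, by simp [mem_condSet], by simp [mem_condSet], hsep⟩
    rw [← hme] at hmem
    refine hmem.2.2.2 (DAG.dconn_collider hub hwb ?_)
    exact mem_condSet.mpr ⟨Ne.symm hwb', Ne.symm hub', le_of_lt hblt⟩
  rcases lt_or_gt_of_ne (fun h => hac (ρH.symm.injective h)) with h | h
  · exact key a c hac h hab hcb hnadj
  · have := key c a (Ne.symm hac) h hcb hab (fun h' => hnadj h'.symm)
    exact ⟨this.2, this.1⟩

end Markov
section Flip
variable {p : ℕ}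

namespace DAG

/-- capability: reach `y₀` from `z` by an `S`-active walk in `G` with flag `f`,
or be `y₀` itself. -/
def Ecap (G : DAG p) (S : Finset (Fin p)) (y₀ z : Fin p) (f : Bool) : Prop :=
  AW G S (· ∈ S) z y₀ f ∨ z = y₀

theorem Ecap.x1 {G : DAG p} {S : Finset (Fin p)} {y₀ b z : Fin p} {f : Bool}
    (h : Ecap G S y₀ b f) (e : G.Arrow b z) (hb : b ∉ S) :
    AW G S (· ∈ S) z y₀ false := by
  rcases h with h | h
  · exact .headOut e hb h
  · subst h; exact .single' e

theorem Ecap.x2 {G : DAG p} {S : Finset (Fin p)} {y₀ b z : Fin p}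
    (h : Ecap G S y₀ b true) (e : G.Arrow z b) (hb : b ∉ S) :
    AW G S (· ∈ S) z y₀ true := by
  rcases h with h | h
  · exact .headIn e hb h
  · subst h; exact .single e

theorem Ecap.x3 {G : DAG p} {S : Finset (Fin p)} {y₀ b z : Fin p}
    (h : Ecap G S y₀ b false) (e : G.Arrow z b) (hb : b ∈ S) :
    AW G S (· ∈ S) z y₀ true := by
  rcases h with h | h
  · exact .headColl e hb h
  · subst h; exact .single e

theorem Ecap.ofAW {G : DAG p} {S : Finset (Fin p)} {y₀ z : Fin p} {f : Bool}
    (h : AW G S (· ∈ S) z y₀ f) : Ecap G S y₀ z f := Or.inl h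

theorem Ecap.ofEq {G : DAG p} {S : Finset (Fin p)} {y₀ : Fin p} (f : Bool) :
    Ecap G S y₀ y₀ f := Or.inr rfl

/-- capabilities at state `(u, false)` -/
def UF (G : DAG p) (S : Finset (Fin p)) (y₀ u v : Fin p) : Prop :=
  (Ecap G S y₀ u false ∧ Ecap G S y₀ v false) ∨
  (Ecap G S y₀ u true ∧ Ecap G S y₀ v true ∧ v ∉ S) ∨
  (Ecap G S y₀ u true ∧ u ∉ S ∧ Ecap G S y₀ v false)

/-- capabilities at state `(v, true)` -/
def VT (G : DAG p) (S : Finset (Fin p)) (y₀ u v : Fin p) : Prop :=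
  Ecap G S y₀ v true ∨
  (Ecap G S y₀ u true ∧ u ∉ S ∧ Ecap G S y₀ v false) ∨
  (Ecap G S y₀ u false ∧ u ∈ S ∧ Ecap G S y₀ v false)

/-- The simulation invariant for covered arrow reversal. -/
def Pcap (G : DAG p) (S : Finset (Fin p)) (y₀ u v z : Fin p) (f : Bool) : Prop :=
  (z ≠ u → z ≠ v → Ecap G S y₀ z f) ∧
  (z = u → f = true → Ecap G S y₀ u true) ∧
  (z = u → f = false → UF G S y₀ u v) ∧
  (z = v → f = true → VT G S y₀ u v) ∧
  (z = v → f = false → (Ecap G S y₀ v false ∧ Ecap G S y₀ u false))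

section PcapHelpers
variable {G : DAG p} {S : Finset (Fin p)} {y₀ u v z : Fin p} {f : Bool}

theorem Pcap.ofGeneric (hzu : z ≠ u) (hzv : z ≠ v) (h : Ecap G S y₀ z f) :
    Pcap G S y₀ u v z f :=
  ⟨fun _ _ => h, fun h' _ => absurd h' hzu, fun h' _ => absurd h' hzu,
   fun h' _ => absurd h' hzv, fun h' _ => absurd h' hzv⟩

theorem Pcap.atUtrue (hne : u ≠ v) (h : Ecap G S y₀ u true) : Pcap G S y₀ u v u true :=
  ⟨fun h' _ => absurd rfl h', fun _ _ => h, fun _ hf => by simp at hf,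
   fun h' _ => absurd h' hne, fun h' _ => absurd h' hne⟩

theorem Pcap.atUfalse (hne : u ≠ v) (h : UF G S y₀ u v) : Pcap G S y₀ u v u false :=
  ⟨fun h' _ => absurd rfl h', fun _ hf => by simp at hf, fun _ _ => h,
   fun h' _ => absurd h' hne, fun h' _ => absurd h' hne⟩

theorem Pcap.atVtrue (hne : u ≠ v) (h : VT G S y₀ u v) : Pcap G S y₀ u v v true :=
  ⟨fun _ h' => absurd rfl h', fun h' _ => absurd h'.symm hne, fun h' _ => absurd h'.symm hne,
   fun _ _ => h, fun _ hf => by simp at hf⟩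

theorem Pcap.atVfalse (hne : u ≠ v) (h : Ecap G S y₀ v false ∧ Ecap G S y₀ u false) :
    Pcap G S y₀ u v v false :=
  ⟨fun _ h' => absurd rfl h', fun h' _ => absurd h'.symm hne, fun h' _ => absurd h'.symm hne,
   fun _ hf => by simp at hf, fun _ _ => h⟩

theorem Pcap.uTrue (h : Pcap G S y₀ u v u true) : Ecap G S y₀ u true := h.2.1 rfl rfl
theorem Pcap.uFalse (h : Pcap G S y₀ u v u false) : UF G S y₀ u v := h.2.2.1 rfl rfl
theorem Pcap.vTrue (h : Pcap G S y₀ u v v true) : VT G S y₀ u v := h.2.2.2.1 rfl rfl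
theorem Pcap.vFalse (h : Pcap G S y₀ u v v false) :
    Ecap G S y₀ v false ∧ Ecap G S y₀ u false := h.2.2.2.2 rfl rfl

theorem Pcap.someE (huv : u ≠ v) (h : Pcap G S y₀ u v z f) : ∃ g, Ecap G S y₀ z g := by
  by_cases hzu : z = u
  · subst z
    cases f with
    | true => exact ⟨true, h.uTrue⟩
    | false =>
      rcases h.uFalse with ⟨h', -⟩ | ⟨h', -⟩ | ⟨h', -⟩
      exacts [⟨false, h'⟩, ⟨true, h'⟩, ⟨true, h'⟩]
  · by_cases hzv : z = v
    · subst z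
      cases f with
      | true =>
        rcases h.vTrue with h' | ⟨-, -, h'⟩ | ⟨-, -, h'⟩
        exacts [⟨true, h'⟩, ⟨false, h'⟩, ⟨false, h'⟩]
      | false => exact ⟨false, h.vFalse.1⟩
    · exact ⟨f, h.1 hzu hzv⟩

end PcapHelpers

/-- The main simulation: an active walk in the covered-arrow reversal `G'` of `G`
yields the corresponding capabilities in `G`. -/
theorem flip_sim {G G' : DAG p} {u v : Fin p} (huv : G.Arrow u v)
    (hpa : ∀ x, G.Arrow x u ↔ (G.Arrow x v ∧ x ≠ u))
    (hG' : ∀ a b, G'.Arrow a b ↔ ((G.Arrow a b ∧ (a, b) ≠ (u, v)) ∨ (a, b) = (v, u)))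
    {S : Finset (Fin p)} {y₀ : Fin p} (hy₀ : y₀ ∉ S) {z : Fin p} {f : Bool}
    (hw : AW G' S (· ∈ S) z y₀ f) : Pcap G S y₀ u v z f := by
  have hne : u ≠ v := fun h => arrow_irrefl G u (h ▸ huv)
  have hnvu : ¬ G.Arrow v u := arrow_asymm huv
  have decode : ∀ {a b : Fin p}, G'.Arrow a b →
      (G.Arrow a b ∧ (a, b) ≠ (u, v)) ∨ (a = v ∧ b = u) := by
    intro a b h
    rcases (hG' a b).mp h with h | h
    · exact Or.inl h
    · exact Or.inr ⟨congrArg Prod.fst h, congrArg Prod.snd h⟩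
  induction hw with
  | @single a y h =>
    rcases decode h with ⟨h, hne'⟩ | ⟨hav, hyu⟩
    · -- shared edge a → y₀
      by_cases hau : a = u
      · subst a; exact .atUtrue hne (.ofAW (.single h))
      · by_cases hav : a = v
        · subst a; exact .atVtrue hne (Or.inl (.ofAW (.single h)))
        · exact .ofGeneric hau hav (.ofAW (.single h))
    · -- flip edge: a = v, y₀ = u
      subst a; subst y
      exact .atVtrue hne (Or.inr (Or.inl ⟨.ofEq true, hy₀, .ofAW (.single' huv)⟩))
  | @single' a y h =>
    rcases decode h with ⟨h, hne'⟩ | ⟨hyv, hau⟩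
    · -- shared edge y₀ → a
      by_cases hau : a = u
      · subst a
        exact .atUfalse hne (Or.inl ⟨.ofAW (.single' h), .ofAW (.single' ((hpa _).mp h).1)⟩)
      · by_cases hav : a = v
        · subst a
          have hyu : y ≠ u := fun h' => hne' (by rw [h'])
          exact .atVfalse hne ⟨.ofAW (.single' h), .ofAW (.single' ((hpa _).mpr ⟨h, hyu⟩))⟩
        · exact .ofGeneric hau hav (.ofAW (.single' h))
    · -- flip edge: y₀ = v, a = u
      subst a; subst y
      exact .atUfalse hne (Or.inr (Or.inl ⟨.ofAW (.single huv), .ofEq true, hy₀⟩))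
  | @headOut a b y f' e hb hw ih =>
    have ih := ih hy₀
    rcases decode e with ⟨e, hne'⟩ | ⟨hbv, hau⟩
    · -- shared edge b → a ; b is old start
      obtain ⟨g, hEb⟩ := ih.someE hne
      by_cases hau : a = u
      · subst a
        have hbv : b ≠ v := fun h => hnvu (h ▸ e)
        exact .atUfalse hne (Or.inl ⟨.ofAW (hEb.x1 e hb), .ofAW (hEb.x1 ((hpa _).mp e).1 hb)⟩)
      · by_cases hav : a = v
        · subst a
          have hbu : b ≠ u := fun h => hne' (by rw [h])
          exact .atVfalse hne ⟨.ofAW (hEb.x1 e hb), .ofAW (hEb.x1 ((hpa _).mpr ⟨e, hbu⟩) hb)⟩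
        · exact .ofGeneric hau hav (.ofAW (hEb.x1 e hb))
    · -- flip edge: b = v, a = u ; prior state (v, f'), condition v ∉ S
      subst b; subst a
      refine .atUfalse hne ?_
      cases f' with
      | true =>
        rcases ih.vTrue with hEv | ⟨hEu, huS, hEv⟩ | ⟨hEu, huS, hEv⟩
        · exact Or.inr (Or.inl ⟨.ofAW (hEv.x2 huv hb), hEv, hb⟩)
        · exact Or.inr (Or.inr ⟨hEu, huS, hEv⟩)
        · exact Or.inl ⟨hEu, hEv⟩
      | false =>
        obtain ⟨hEv, hEu⟩ := ih.vFalse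
        exact Or.inl ⟨hEu, hEv⟩
  | @headIn a b y e hb hw ih =>
    have ih := ih hy₀
    rcases decode e with ⟨e, hne'⟩ | ⟨hav, hbu⟩
    · -- shared edge a → b ; prior state (b, true)
      by_cases hbu : b = u
      · subst b
        have hEu := ih.uTrue
        have hau : a ≠ u := fun h => arrow_irrefl G u (h ▸ e)
        have hav : a ≠ v := fun h => hnvu (h ▸ e)
        exact .ofGeneric hau hav (.ofAW (hEu.x2 e hb))
      · by_cases hbv : b = v
        · subst b
          have hau : a ≠ u := fun h => hne' (by rw [h])
          have hapu : G.Arrow a u := (hpa _).mpr ⟨e, hau⟩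
          have hav : a ≠ v := fun h => arrow_irrefl G v (h ▸ e)
          rcases ih.vTrue with hEv | ⟨hEu, huS, -⟩ | ⟨hEu, huS, -⟩
          · exact .ofGeneric hau hav (.ofAW (hEv.x2 e hb))
          · exact .ofGeneric hau hav (.ofAW (hEu.x2 hapu huS))
          · exact .ofGeneric hau hav (.ofAW (hEu.x3 hapu huS))
        · have hEb := ih.1 hbu hbv
          by_cases hau : a = u
          · subst a; exact .atUtrue hne (.ofAW (hEb.x2 e hb))
          · by_cases hav : a = v
            · subst a; exact .atVtrue hne (Or.inl (.ofAW (hEb.x2 e hb)))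
            · exact .ofGeneric hau hav (.ofAW (hEb.x2 e hb))
    · -- flip edge: a = v, b = u ; prior state (u, true), condition u ∉ S
      subst a; subst b
      have hEu := ih.uTrue
      exact .atVtrue hne (Or.inr (Or.inl ⟨hEu, hb, .ofAW (hEu.x1 huv hb)⟩))
  | @headColl a b y e hb hw ih =>
    have ih := ih hy₀
    rcases decode e with ⟨e, hne'⟩ | ⟨hav, hbu⟩
    · -- shared edge a → b ; prior state (b, false), condition b ∈ S
      by_cases hbu : b = u
      · subst b
        have hau : a ≠ u := fun h => arrow_irrefl G u (h ▸ e)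
        have hapv : G.Arrow a v := ((hpa _).mp e).1
        have hav : a ≠ v := fun h => hnvu (h ▸ e)
        have hAW : AW G S (· ∈ S) a y true := by
          rcases ih.uFalse with ⟨hEu, -⟩ | ⟨-, hEv, hvS⟩ | ⟨-, huS, -⟩
          · exact hEu.x3 e hb
          · exact hEv.x2 hapv hvS
          · exact absurd hb huS
        exact .ofGeneric hau hav (.ofAW hAW)
      · by_cases hbv : b = v
        · subst b
          have hau : a ≠ u := fun h => hne' (by rw [h])
          have hav : a ≠ v := fun h => arrow_irrefl G v (h ▸ e)
          exact .ofGeneric hau hav (.ofAW (ih.vFalse.1.x3 e hb))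
        · have hEb := ih.1 hbu hbv
          by_cases hau : a = u
          · subst a; exact .atUtrue hne (.ofAW (hEb.x3 e hb))
          · by_cases hav : a = v
            · subst a; exact .atVtrue hne (Or.inl (.ofAW (hEb.x3 e hb)))
            · exact .ofGeneric hau hav (.ofAW (hEb.x3 e hb))
    · -- flip edge: a = v, b = u ; prior state (u, false), condition u ∈ S
      subst a; subst b
      refine .atVtrue hne ?_
      rcases ih.uFalse with ⟨hEu, hEv⟩ | ⟨-, hEv, -⟩ | ⟨-, huS, -⟩
      · exact Or.inr (Or.inr ⟨hEu, hb, hEv⟩)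
      · exact Or.inl hEv
      · exact absurd hb huS

/-- Transfer of d-connection across a covered arrow reversal. -/
theorem flip_dconn {G G' : DAG p} {u v : Fin p} (huv : G.Arrow u v)
    (hpa : ∀ x, G.Arrow x u ↔ (G.Arrow x v ∧ x ≠ u))
    (hG' : ∀ a b, G'.Arrow a b ↔ ((G.Arrow a b ∧ (a, b) ≠ (u, v)) ∨ (a, b) = (v, u)))
    {S : Finset (Fin p)} {x y : Fin p} (hxy : x ≠ y) (hyS : y ∉ S)
    (h : G'.DConn x y S) : G.DConn x y S := by
  have hne : u ≠ v := fun h => arrow_irrefl G u (h ▸ huv)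
  obtain ⟨f, hw⟩ := dconn_to_aw hxy h
  have hw' := AW.norm hw
  have hP := flip_sim huv hpa hG' hyS hw'
  obtain ⟨g, hE⟩ := hP.someE hne
  rcases hE with hE | hE
  · exact (AW.toDesc hE).dconn
  · exact absurd hE hxy

end DAG

/-- A covered arrow reversal does not change the set of CI relations. -/
theorem flip_CIof {G G' : DAG p} {u v : Fin p} (huv : G.Arrow u v)
    (hpa : ∀ x, G.Arrow x u ↔ (G.Arrow x v ∧ x ≠ u))
    (hG' : ∀ a b, G'.Arrow a b ↔ ((G.Arrow a b ∧ (a, b) ≠ (u, v)) ∨ (a, b) = (v, u))) :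
    CIof G = CIof G' := by
  have hne : u ≠ v := fun h => DAG.arrow_irrefl G u (h ▸ huv)
  have hnvu : ¬ G.Arrow v u := DAG.arrow_asymm huv
  have hvu' : G'.Arrow v u := (hG' v u).mpr (Or.inr rfl)
  have hnuv' : ¬ G'.Arrow u v := by
    intro h
    rcases (hG' u v).mp h with ⟨-, h⟩ | h
    · exact h rfl
    · exact hne (congrArg Prod.fst h)
  -- the reversed covered-arrow structure in G'
  have hpa' : ∀ x, G'.Arrow x v ↔ (G'.Arrow x u ∧ x ≠ v) := by
    intro x
    constructor
    · intro h
      rcases (hG' x v).mp h with ⟨h, hne'⟩ | h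
      · have hxu : x ≠ u := fun he => hne' (by rw [he])
        have h1 : G.Arrow x u := (hpa x).mpr ⟨h, hxu⟩
        have hxv : x ≠ v := fun he => DAG.arrow_irrefl G v (he ▸ h)
        exact ⟨(hG' x u).mpr (Or.inl ⟨h1, fun hP => hne (congrArg Prod.snd hP)⟩), hxv⟩
      · exact absurd (congrArg Prod.snd h) hne.symm
    · rintro ⟨h, hxv⟩
      rcases (hG' x u).mp h with ⟨h, -⟩ | h
      · have h1 : G.Arrow x v := ((hpa x).mp h).1
        refine (hG' x v).mpr (Or.inl ⟨h1, ?_⟩)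
        intro he
        have h1' : x = u := congrArg Prod.fst he
        exact DAG.arrow_irrefl G u (h1' ▸ h)
      · exact absurd (congrArg Prod.fst h) hxv
  have hG : ∀ a b, G.Arrow a b ↔ ((G'.Arrow a b ∧ (a, b) ≠ (v, u)) ∨ (a, b) = (u, v)) := by
    intro a b
    constructor
    · intro h
      by_cases hab : (a, b) = (u, v)
      · exact Or.inr hab
      · refine Or.inl ⟨(hG' a b).mpr (Or.inl ⟨h, hab⟩), ?_⟩
        intro he
        have h1 : a = v := congrArg Prod.fst he
        have h2 : b = u := congrArg Prod.snd he
        subst h1; subst h2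
        exact hnvu h
    · rintro (⟨h, hne'⟩ | h)
      · rcases (hG' a b).mp h with ⟨h, -⟩ | h
        · exact h
        · exact absurd h hne'
      · have h1 : a = u := congrArg Prod.fst h
        have h2 : b = v := congrArg Prod.snd h
        subst h1; subst h2
        exact huv
  ext ⟨x, y, S⟩
  simp only [CIof, Set.mem_setOf_eq]
  constructor
  · rintro ⟨h1, h2, h3, h4⟩
    refine ⟨h1, h2, h3, fun hconn => h4 ?_⟩
    exact DAG.flip_dconn huv hpa hG' h1 h3 hconn
  · rintro ⟨h1, h2, h3, h4⟩
    refine ⟨h1, h2, h3, fun hconn => h4 ?_⟩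
    exact DAG.flip_dconn hvu' hpa' hG h1 h3 hconn

end Flip
section Swap
variable {p : ℕ} {C : Set (CIRel p)} {α β : Equiv.Perm (Fin p)} {u v : Fin p}

/-- nodes strictly before `u` in the order `α` -/
noncomputable def preSet (α : Equiv.Perm (Fin p)) (u : Fin p) : Finset (Fin p) :=
  Finset.univ.filter fun k => α.symm k < α.symm u

theorem mem_preSet {k : Fin p} : k ∈ preSet α u ↔ α.symm k < α.symm u := by
  simp [preSet]

/-- hypothesis package: `β` is `α` with the consecutive pair `u, v` transposed -/
structure SwapHyp (α β : Equiv.Perm (Fin p)) (u v : Fin p) : Prop where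
  h1u : β.symm u = α.symm v
  h1v : β.symm v = α.symm u
  h2 : ∀ w, w ≠ u → w ≠ v → β.symm w = α.symm w
  h3 : α.symm u < α.symm v
  h4 : ∀ w, α.symm u < α.symm w → α.symm v ≤ α.symm w

namespace SwapHyp

theorem hne (hs : SwapHyp α β u v) : u ≠ v := fun h => absurd (h ▸ hs.h3) (lt_irrefl _)

theorem lt_u_of_lt_v (hs : SwapHyp α β u v) {x : Fin p} (hxu : x ≠ u) (hxv : x ≠ v)
    (h : α.symm x < α.symm v) : α.symm x < α.symm u := by
  rcases lt_or_ge (α.symm u) (α.symm x) with h' | h'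
  · exact absurd (hs.h4 _ h') (not_le.mpr h)
  · exact lt_of_le_of_ne h' (fun he => hxu (α.symm.injective he))

theorem W1 (hs : SwapHyp α β u v) (x : Fin p) : condSet α x u = (preSet α u).erase x := by
  ext k
  simp only [mem_condSet, Finset.mem_erase, mem_preSet]
  constructor
  · rintro ⟨hku, hkx, hle⟩
    exact ⟨hkx, lt_of_le_of_ne hle (fun he => hku (α.symm.injective he))⟩
  · rintro ⟨hkx, hlt⟩
    exact ⟨fun he => absurd (he ▸ hlt) (lt_irrefl _), hkx, le_of_lt hlt⟩

theorem W2 (hs : SwapHyp α β u v) (x : Fin p) : condSet β x v = (preSet α u).erase x := by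
  ext k
  simp only [mem_condSet, Finset.mem_erase, mem_preSet, hs.h1v]
  constructor
  · rintro ⟨hkv, hkx, hle⟩
    refine ⟨hkx, ?_⟩
    by_cases hku : k = u
    · rw [hku, hs.h1u] at hle
      exact absurd (lt_of_le_of_lt hle hs.h3) (lt_irrefl _)
    · rw [hs.h2 k hku hkv] at hle
      exact lt_of_le_of_ne hle (fun he => hku (α.symm.injective he))
  · rintro ⟨hkx, hlt⟩
    have hku : k ≠ u := fun he => absurd (he ▸ hlt) (lt_irrefl _)
    have hkv : k ≠ v := fun he => absurd (lt_trans (he ▸ hlt) hs.h3) (lt_irrefl _)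
    exact ⟨hkv, hkx, by rw [hs.h2 k hku hkv]; exact le_of_lt hlt⟩

theorem W3 (hs : SwapHyp α β u v) {x : Fin p} (hxu : x ≠ u) : condSet α x v = insert u ((preSet α u).erase x) := by
  ext k
  simp only [mem_condSet, Finset.mem_insert, Finset.mem_erase, mem_preSet]
  constructor
  · rintro ⟨hkv, hkx, hle⟩
    by_cases hku : k = u
    · exact Or.inl hku
    · refine Or.inr ⟨hkx, ?_⟩
      have hlt : α.symm k < α.symm v := lt_of_le_of_ne hle (fun he => hkv (α.symm.injective he))
      exact hs.lt_u_of_lt_v hku hkv hlt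
  · rintro (rfl | ⟨hkx, hlt⟩)
    · exact ⟨hs.hne, hxu.symm, le_of_lt hs.h3⟩
    · have hkv : k ≠ v := fun he => absurd (lt_trans (he ▸ hlt) hs.h3) (lt_irrefl _)
      exact ⟨hkv, hkx, le_of_lt (lt_trans hlt hs.h3)⟩

theorem W4 (hs : SwapHyp α β u v) {x : Fin p} (hxv : x ≠ v) : condSet β x u = insert v ((preSet α u).erase x) := by
  ext k
  simp only [mem_condSet, Finset.mem_insert, Finset.mem_erase, mem_preSet, hs.h1u]
  constructor
  · rintro ⟨hku, hkx, hle⟩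
    by_cases hkv : k = v
    · exact Or.inl hkv
    · refine Or.inr ⟨hkx, ?_⟩
      rw [hs.h2 k hku hkv] at hle
      have hlt : α.symm k < α.symm v := lt_of_le_of_ne hle (fun he => hkv (α.symm.injective he))
      exact hs.lt_u_of_lt_v hku hkv hlt
  · rintro (rfl | ⟨hkx, hlt⟩)
    · exact ⟨hs.hne.symm, hxv.symm, by rw [hs.h1v]; exact le_of_lt hs.h3⟩
    · have hku : k ≠ u := fun he => absurd (he ▸ hlt) (lt_irrefl _)
      have hkv : k ≠ v := fun he => absurd (lt_trans (he ▸ hlt) hs.h3) (lt_irrefl _)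
      exact ⟨hku, hkx, by rw [hs.h2 k hku hkv]; exact le_of_lt (lt_trans hlt hs.h3)⟩

theorem W5a (hs : SwapHyp α β u v) : condSet α u v = preSet α u := by
  ext k
  simp only [mem_condSet, mem_preSet]
  constructor
  · rintro ⟨hkv, hku, hle⟩
    have hlt : α.symm k < α.symm v := lt_of_le_of_ne hle (fun he => hkv (α.symm.injective he))
    exact hs.lt_u_of_lt_v hku hkv hlt
  · intro hlt
    have hku : k ≠ u := fun he => absurd (he ▸ hlt) (lt_irrefl _)
    have hkv : k ≠ v := fun he => absurd (lt_trans (he ▸ hlt) hs.h3) (lt_irrefl _)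
    exact ⟨hkv, hku, le_of_lt (lt_trans hlt hs.h3)⟩

theorem W5b (hs : SwapHyp α β u v) : condSet β v u = preSet α u := by
  ext k
  simp only [mem_condSet, mem_preSet, hs.h1u]
  constructor
  · rintro ⟨hku, hkv, hle⟩
    rw [hs.h2 k hku hkv] at hle
    have hlt : α.symm k < α.symm v := lt_of_le_of_ne hle (fun he => hkv (α.symm.injective he))
    exact hs.lt_u_of_lt_v hku hkv hlt
  · intro hlt
    have hku : k ≠ u := fun he => absurd (he ▸ hlt) (lt_irrefl _)
    have hkv : k ≠ v := fun he => absurd (lt_trans (he ▸ hlt) hs.h3) (lt_irrefl _)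
    exact ⟨hku, hkv, by rw [hs.h2 k hku hkv]; exact le_of_lt (lt_trans hlt hs.h3)⟩

theorem W6 (hs : SwapHyp α β u v) {y : Fin p} (hyu : y ≠ u) (hyv : y ≠ v) (x : Fin p) :
    condSet β x y = condSet α x y := by
  have hy : β.symm y = α.symm y := hs.h2 y hyu hyv
  ext k
  simp only [mem_condSet, hy]
  constructor
  · rintro ⟨hky, hkx, hle⟩
    refine ⟨hky, hkx, ?_⟩
    by_cases hku : k = u
    · subst hku
      rw [hs.h1u] at hle
      exact le_of_lt (lt_of_lt_of_le hs.h3 hle)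
    · by_cases hkv : k = v
      · subst hkv
        rw [hs.h1v] at hle
        have : α.symm u < α.symm y :=
          lt_of_le_of_ne hle (fun he => hyu (α.symm.injective he.symm))
        exact hs.h4 _ this
      · rw [hs.h2 k hku hkv] at hle; exact hle
  · rintro ⟨hky, hkx, hle⟩
    refine ⟨hky, hkx, ?_⟩
    by_cases hku : k = u
    · rw [hku, hs.h1u]
      have h' : α.symm u < α.symm y :=
        lt_of_le_of_ne (hku ▸ hle) (fun he => hyu (α.symm.injective he).symm)
      exact hs.h4 _ h'
    · by_cases hkv : k = v
      · subst hkv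
        rw [hs.h1v]
        exact le_of_lt (lt_of_lt_of_le hs.h3 hle)
      · rw [hs.h2 k hku hkv]; exact hle

theorem ord_v (hs : SwapHyp α β u v) {x : Fin p} (hxu : x ≠ u) (hxv : x ≠ v) :
    β.symm x < β.symm v ↔ α.symm x < α.symm v := by
  rw [hs.h1v, hs.h2 x hxu hxv]
  constructor
  · intro h; exact lt_trans h hs.h3
  · intro h; exact hs.lt_u_of_lt_v hxu hxv h

theorem ord_u (hs : SwapHyp α β u v) {x : Fin p} (hxu : x ≠ u) (hxv : x ≠ v) :
    β.symm x < β.symm u ↔ α.symm x < α.symm u := by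
  rw [hs.h1u, hs.h2 x hxu hxv]
  constructor
  · intro h; exact hs.lt_u_of_lt_v hxu hxv h
  · intro h; exact lt_trans h hs.h3

theorem ord_gen (hs : SwapHyp α β u v) {x y : Fin p} (hyu : y ≠ u) (hyv : y ≠ v) :
    β.symm x < β.symm y ↔ α.symm x < α.symm y := by
  have hy : β.symm y = α.symm y := hs.h2 y hyu hyv
  rw [hy]
  by_cases hxu : x = u
  · subst hxu
    rw [hs.h1u]
    constructor
    · intro h; exact lt_trans hs.h3 h
    · intro h
      exact lt_of_le_of_ne (hs.h4 _ h) (fun he => hyv ((α.symm.injective he).symm))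
  · by_cases hxv : x = v
    · subst hxv
      rw [hs.h1v]
      constructor
      · intro h
        have h' := hs.h4 _ h
        exact lt_of_le_of_ne h' (fun he => hyv (α.symm.injective he).symm)
      · intro h; exact lt_trans hs.h3 h
    · rw [hs.h2 x hxu hxv]

end SwapHyp
end Swap
section SwapIMAP
variable {p : ℕ} {C : Set (CIRel p)} {α β : Equiv.Perm (Fin p)} {u v : Fin p}

/-- The basic graphoid exchange along a covered/nonadjacent pair. -/
theorem graphoid_exchange (hC : Graphoid C) {u v x : Fin p} {W : Finset (Fin p)}
    (huv : (u, v, insert x W) ∈ C) :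
    (((x, u, W) ∈ C ↔ (x, u, insert v W) ∈ C) ∧
     ((x, v, insert u W) ∈ C ↔ (x, v, W) ∈ C)) := by
  obtain ⟨⟨hsym, hsg⟩, hint⟩ := hC
  constructor
  · constructor
    · intro hin
      have h1 := hsym _ _ _ hin
      have h2 := (hsg u x v W h1 huv).2
      exact hsym _ _ _ h2
    · intro hin
      have h1 := hsym _ _ _ hin
      have h2 := (hint u x v W h1 huv).1
      exact hsym _ _ _ h2
  · constructor
    · intro hin
      have h1 := hsym _ _ _ hin
      have h2 := hsym _ _ _ huv
      have h3 := (hint v x u W h1 h2).1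
      exact hsym _ _ _ h3
    · intro hin
      have h1 := hsym _ _ _ hin
      have h2 := hsym _ _ _ huv
      have h3 := (hsg v x u W h1 h2).2
      exact hsym _ _ _ h3

theorem insert_erase_preSet {x : Fin p} (hx : α.symm x < α.symm u) :
    insert x ((preSet α u).erase x) = preSet α u :=
  Finset.insert_erase (mem_preSet.mpr hx)

/-- Transposing a consecutive nonadjacent pair leaves the minimal I-MAP unchanged. -/
theorem ns_swap (hC : Graphoid C) (hs : SwapHyp α β u v)
    (hnadj : (u, v, preSet α u) ∈ C) : minimalIMAP C β = minimalIMAP C α := by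
  have hne := hs.hne
  have hsym := hC.1.1
  apply DAG.ext'
  ext ⟨x, y⟩
  change (minimalIMAP C β).Arrow x y ↔ (minimalIMAP C α).Arrow x y
  rw [mem_minimalIMAP, mem_minimalIMAP]
  by_cases hyu : y = u
  · subst y
    by_cases hxv : x = v
    · subst x
      constructor
      · rintro ⟨-, hnC⟩
        rw [hs.W5b] at hnC
        exact absurd (hsym _ _ _ hnadj) hnC
      · rintro ⟨hord, -⟩
        exact absurd (lt_trans hs.h3 hord) (lt_irrefl _)
    · by_cases hxu : x = u
      · subst x
        constructor <;> (rintro ⟨hord, -⟩; exact absurd hord (lt_irrefl _))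
      · have hexc : (u, v, insert x ((preSet α u).erase x)) ∈ C → _ :=
          fun h => graphoid_exchange hC (x := x) (W := (preSet α u).erase x) h
        constructor
        · rintro ⟨hord, hnC⟩
          have hordα : α.symm x < α.symm u := (hs.ord_u hxu hxv).mp hord
          refine ⟨hordα, fun hin => hnC ?_⟩
          rw [hs.W1] at hin
          rw [hs.W4 hxv]
          exact ((hexc (by rw [insert_erase_preSet hordα]; exact hnadj)).1).mp hin
        · rintro ⟨hordα, hnC⟩
          refine ⟨(hs.ord_u hxu hxv).mpr hordα, fun hin => hnC ?_⟩
          rw [hs.W4 hxv] at hin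
          rw [hs.W1]
          exact ((hexc (by rw [insert_erase_preSet hordα]; exact hnadj)).1).mpr hin
  · by_cases hyv : y = v
    · subst y
      by_cases hxu : x = u
      · subst x
        constructor
        · rintro ⟨hord, -⟩
          rw [hs.h1u, hs.h1v] at hord
          exact absurd (lt_trans hs.h3 hord) (lt_irrefl _)
        · rintro ⟨-, hnC⟩
          rw [hs.W5a] at hnC
          exact absurd hnadj hnC
      · by_cases hxv : x = v
        · subst x
          constructor <;> (rintro ⟨hord, -⟩; exact absurd hord (lt_irrefl _))
        · have hexc : (u, v, insert x ((preSet α u).erase x)) ∈ C → _ :=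
            fun h => graphoid_exchange hC (x := x) (W := (preSet α u).erase x) h
          constructor
          · rintro ⟨hord, hnC⟩
            have hordα : α.symm x < α.symm v := (hs.ord_v hxu hxv).mp hord
            have hordu : α.symm x < α.symm u := hs.lt_u_of_lt_v hxu hxv hordα
            refine ⟨hordα, fun hin => hnC ?_⟩
            rw [hs.W3 hxu] at hin
            rw [hs.W2]
            exact ((hexc (by rw [insert_erase_preSet hordu]; exact hnadj)).2).mp hin
          · rintro ⟨hordα, hnC⟩
            have hordu : α.symm x < α.symm u := hs.lt_u_of_lt_v hxu hxv hordα
            refine ⟨(hs.ord_v hxu hxv).mpr hordα, fun hin => hnC ?_⟩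
            rw [hs.W2] at hin
            rw [hs.W3 hxu]
            exact ((hexc (by rw [insert_erase_preSet hordu]; exact hnadj)).2).mpr hin
    · rw [hs.W6 hyu hyv x, hs.ord_gen hyu hyv]

/-- Transposing a consecutive covered arrow reverses exactly that arrow of the
minimal I-MAP, provided the arrows into `u` and `v` are preserved. -/
theorem cs_swap (hC : Graphoid C) (hs : SwapHyp α β u v)
    (harr : (minimalIMAP C α).Arrow u v)
    (hcov : ∀ x, (minimalIMAP C α).Arrow x u ↔ ((minimalIMAP C α).Arrow x v ∧ x ≠ u))
    (h₁ : ∀ x, (minimalIMAP C α).Arrow x v → x ≠ u → (x, v, condSet β x v) ∉ C)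
    (h₂ : ∀ x, (minimalIMAP C α).Arrow x u → (x, u, condSet β x u) ∉ C) :
    ∀ a b, (minimalIMAP C β).Arrow a b ↔
      (((minimalIMAP C α).Arrow a b ∧ (a, b) ≠ (u, v)) ∨ (a, b) = (v, u)) := by
  have hne := hs.hne
  have hsym := hC.1.1
  have hsg := hC.1.2
  have hPuv : (u, v, preSet α u) ∉ C := by
    have := (mem_minimalIMAP.mp harr).2
    rwa [hs.W5a] at this
  intro a b
  by_cases hbu : b = u
  · subst b
    by_cases hav : a = v
    · subst a
      constructor
      · intro _; exact Or.inr rfl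
      · intro _
        refine mem_minimalIMAP.mpr ⟨by rw [hs.h1u, hs.h1v]; exact hs.h3, ?_⟩
        rw [hs.W5b]
        intro hin
        exact hPuv (hsym _ _ _ hin)
    · by_cases hau : a = u
      · subst a
        constructor
        · intro h
          exact absurd (mem_minimalIMAP.mp h).1 (lt_irrefl _)
        · rintro (⟨h, -⟩ | h)
          · exact absurd (mem_minimalIMAP.mp h).1 (lt_irrefl _)
          · exact absurd (congrArg Prod.fst h) hne
      · -- generic a, b = u
        constructor
        · intro h
          obtain ⟨hord, hnC⟩ := mem_minimalIMAP.mp h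
          have hordα : α.symm a < α.symm u := (hs.ord_u hau hav).mp hord
          have harru : (minimalIMAP C α).Arrow a u := by
            by_contra hn
            have hnv : ¬ (minimalIMAP C α).Arrow a v := fun h' => hn ((hcov a).mpr ⟨h', hau⟩)
            have hmu : (a, u, (preSet α u).erase a) ∈ C := by
              have := mem_minimalIMAP.not.mp hn
              rw [not_and] at this
              have := not_not.mp (this hordα)
              rwa [hs.W1] at this
            have hmv : (a, v, insert u ((preSet α u).erase a)) ∈ C := by
              have hordv : α.symm a < α.symm v := lt_trans hordα hs.h3
              have := mem_minimalIMAP.not.mp hnv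
              rw [not_and] at this
              have := not_not.mp (this hordv)
              rwa [hs.W3 hau] at this
            exact hnC (by rw [hs.W4 hav]; exact (hsg a u v _ hmu hmv).2)
          exact Or.inl ⟨harru, fun he => hne (congrArg Prod.snd he)⟩
        · rintro (⟨h, -⟩ | h)
          · refine mem_minimalIMAP.mpr ⟨?_, h₂ a h⟩
            exact (hs.ord_u hau hav).mpr (mem_minimalIMAP.mp h).1
          · exact absurd (congrArg Prod.fst h) hav
  · by_cases hbv : b = v
    · subst b
      by_cases hau : a = u
      · subst a
        constructor
        · intro h
          have := (mem_minimalIMAP.mp h).1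
          rw [hs.h1u, hs.h1v] at this
          exact absurd (lt_trans hs.h3 this) (lt_irrefl _)
        · rintro (⟨-, h⟩ | h)
          · exact absurd rfl h
          · exact absurd (congrArg Prod.snd h) hne.symm
      · by_cases hav : a = v
        · subst a
          constructor
          · intro h
            exact absurd (mem_minimalIMAP.mp h).1 (lt_irrefl _)
          · rintro (⟨h, -⟩ | h)
            · exact absurd (mem_minimalIMAP.mp h).1 (lt_irrefl _)
            · exact absurd (congrArg Prod.snd h) hne.symm
        · -- generic a, b = v
          constructor
          · intro h
            obtain ⟨hord, hnC⟩ := mem_minimalIMAP.mp h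
            have hordα : α.symm a < α.symm v := (hs.ord_v hau hav).mp hord
            have hordu : α.symm a < α.symm u := hs.lt_u_of_lt_v hau hav hordα
            have harrv : (minimalIMAP C α).Arrow a v := by
              by_contra hn
              have hnu : ¬ (minimalIMAP C α).Arrow a u := by
                intro h'
                exact hn ((hcov a).mp h').1
              have hmu : (a, u, (preSet α u).erase a) ∈ C := by
                have := mem_minimalIMAP.not.mp hnu
                rw [not_and] at this
                have := not_not.mp (this hordu)
                rwa [hs.W1] at this
              have hmv : (a, v, insert u ((preSet α u).erase a)) ∈ C := by
                have := mem_minimalIMAP.not.mp hn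
                rw [not_and] at this
                have := not_not.mp (this hordα)
                rwa [hs.W3 hau] at this
              have := (hsg a u v ((preSet α u).erase a) hmu hmv).1
              exact hnC (by rw [hs.W2]; exact this)
            exact Or.inl ⟨harrv, fun he => hau (congrArg Prod.fst he)⟩
          · rintro (⟨h, -⟩ | h)
            · refine mem_minimalIMAP.mpr ⟨?_, h₁ a h hau⟩
              exact (hs.ord_v hau hav).mpr (mem_minimalIMAP.mp h).1
            · exact absurd (congrArg Prod.snd h) hne.symm
    · -- generic b
      rw [mem_minimalIMAP, mem_minimalIMAP, hs.W6 hbu hbv a, hs.ord_gen hbu hbv]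
      constructor
      · intro h
        exact Or.inl ⟨h, fun he => hbv (congrArg Prod.snd he)⟩
      · rintro (⟨h, -⟩ | h)
        · exact h
        · exact absurd (congrArg Prod.snd h) hbu

end SwapIMAP
section PermInfra
variable {p : ℕ} {C : Set (CIRel p)}

/-- Build a permutation whose inverse (position function) is a given injective map. -/
noncomputable def permOfPos (s : Fin p → Fin p) (hs : Function.Injective s) :
    Equiv.Perm (Fin p) :=
  (Equiv.ofBijective s (Finite.injective_iff_bijective.mp hs)).symm

theorem permOfPos_symm (s : Fin p → Fin p) (hs : Function.Injective s) (x : Fin p) :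
    (permOfPos s hs).symm x = s x := rfl

/-- The transposition-at-positions permutation: positions of `u` and `v` swapped. -/
noncomputable def swapPos (α : Equiv.Perm (Fin p)) (u v : Fin p) : Equiv.Perm (Fin p) :=
  permOfPos (fun z => α.symm (Equiv.swap u v z))
    (fun a b h => (Equiv.swap u v).injective (α.symm.injective h))

theorem swapPos_symm_u (α : Equiv.Perm (Fin p)) {u v : Fin p} :
    (swapPos α u v).symm u = α.symm v := by
  show α.symm (Equiv.swap u v u) = _
  rw [Equiv.swap_apply_left]

theorem swapPos_symm_v (α : Equiv.Perm (Fin p)) {u v : Fin p} (hne : u ≠ v) :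
    (swapPos α u v).symm v = α.symm u := by
  show α.symm (Equiv.swap u v v) = _
  rw [Equiv.swap_apply_right]

theorem swapPos_symm_other (α : Equiv.Perm (Fin p)) {u v w : Fin p}
    (hwu : w ≠ u) (hwv : w ≠ v) : (swapPos α u v).symm w = α.symm w := by
  show α.symm (Equiv.swap u v w) = _
  rw [Equiv.swap_apply_of_ne_of_ne hwu hwv]

/-- `SwapHyp` for the explicit transposition of a consecutive pair. -/
theorem swapHyp_swapPos {α : Equiv.Perm (Fin p)} {u v : Fin p}
    (h3 : α.symm u < α.symm v)
    (h4 : ∀ w, α.symm u < α.symm w → α.symm v ≤ α.symm w) :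
    SwapHyp α (swapPos α u v) u v := by
  have hne : u ≠ v := fun h => absurd (h ▸ h3) (lt_irrefl _)
  exact ⟨swapPos_symm_u α, swapPos_symm_v α hne, fun w hwu hwv => swapPos_symm_other α hwu hwv,
    h3, h4⟩

/-- Move to a linear extension in which the covered pair `u → v` is consecutive,
without changing the minimal I-MAP. -/
theorem moveDown (hC : Graphoid C) :
    ∀ (n : ℕ) (α : Equiv.Perm (Fin p)) (u v : Fin p),
      ((α.symm v : ℕ) - (α.symm u : ℕ) ≤ n) →
      (minimalIMAP C α).Arrow u v →
      (∀ x, (minimalIMAP C α).Arrow x u ↔ ((minimalIMAP C α).Arrow x v ∧ x ≠ u)) →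
      ∃ α' : Equiv.Perm (Fin p), minimalIMAP C α' = minimalIMAP C α ∧
        α'.symm u < α'.symm v ∧
        (∀ w, α'.symm u < α'.symm w → α'.symm v ≤ α'.symm w) := by
  intro n
  induction n with
  | zero =>
    intro α u v hn harr _
    have := (mem_minimalIMAP.mp harr).1
    rw [Fin.lt_def] at this
    omega
  | succ n ih =>
    intro α u v hn harr hcov
    have hord : α.symm u < α.symm v := (mem_minimalIMAP.mp harr).1
    by_cases hcons : ∀ w, α.symm u < α.symm w → α.symm v ≤ α.symm w
    · exact ⟨α, rfl, hord, hcons⟩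
    · push_neg at hcons
      obtain ⟨w₀, hw₀1, hw₀2⟩ := hcons
      -- the node at position (pos v) - 1
      have hpos1 : 1 ≤ (α.symm v : ℕ) := by
        rw [Fin.lt_def] at hord; omega
      set mv : ℕ := (α.symm v : ℕ) with hmv
      have hmvlt : mv - 1 < p := by
        have := (α.symm v).isLt; omega
      set w : Fin p := α ⟨mv - 1, hmvlt⟩ with hw
      have hwpos : α.symm w = ⟨mv - 1, hmvlt⟩ := by rw [hw, Equiv.symm_apply_apply]
      have hjlt : (α.symm u : ℕ) < mv - 1 := by
        rw [Fin.lt_def] at hw₀1 hw₀2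
        omega
      have hwu : w ≠ u := by
        intro h
        rw [h] at hwpos
        rw [hwpos] at hjlt
        simp at hjlt
      have hwv : w ≠ v := by
        intro h
        rw [h] at hwpos
        have h2 : (α.symm v : ℕ) = mv - 1 := by rw [hwpos]
        omega
      have hwltv : α.symm w < α.symm v := by
        rw [hwpos, Fin.lt_def]
        simp
        omega
      -- w is nonadjacent to v in the I-MAP
      have hnadj : (w, v, condSet α w v) ∈ C := by
        have hnarr : ¬ (minimalIMAP C α).Arrow w v := by
          intro h
          have := (hcov w).mpr ⟨h, hwu⟩
          have hlt := (mem_minimalIMAP.mp this).1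
          rw [hwpos, Fin.lt_def] at hlt
          simp at hlt
          omega
        have := mem_minimalIMAP.not.mp hnarr
        rw [not_and] at this
        exact not_not.mp (this hwltv)
      have h4 : ∀ z, α.symm w < α.symm z → α.symm v ≤ α.symm z := by
        intro z hz
        rw [hwpos, Fin.lt_def] at hz
        rw [Fin.le_def]
        simp at hz
        omega
      have hs : SwapHyp α (swapPos α w v) w v := swapHyp_swapPos hwltv h4
      have heq : minimalIMAP C (swapPos α w v) = minimalIMAP C α := by
        apply ns_swap hC hs
        rw [← hs.W5a]
        exact hnadj
      set β := swapPos α w v with hβ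
      have hβu : β.symm u = α.symm u := swapPos_symm_other α (Ne.symm hwu) (by
        intro h; exact absurd (h ▸ hord) (lt_irrefl _) )
      have hβv : (β.symm v : ℕ) = mv - 1 := by
        rw [hs.h1v, hwpos]
      obtain ⟨α', h1, h2, h3⟩ := ih β u v (by rw [hβu, hβv]; omega)
        (by rw [heq]; exact harr) (by rw [heq]; exact hcov)
      exact ⟨α', h1.trans heq, h2, h3⟩

/-- The reversal of a covered consecutive arrow, realized as a DAG with the
transposed permutation as a linear extension. -/
theorem flip_exists {α β : Equiv.Perm (Fin p)} {u v : Fin p} (hs : SwapHyp α β u v)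
    (harr : (minimalIMAP C α).Arrow u v) :
    ∃ G' : DAG p,
      (∀ a b, G'.Arrow a b ↔
        (((minimalIMAP C α).Arrow a b ∧ (a, b) ≠ (u, v)) ∨ (a, b) = (v, u))) ∧
      IsLinExt G' β := by
  have hne := hs.hne
  have hlin : ∀ a b, ((minimalIMAP C α).Arrow a b ∧ (a, b) ≠ (u, v)) ∨ (a, b) = (v, u) →
      β.symm a < β.symm b := by
    rintro a b (⟨h, hne'⟩ | h)
    · have hord := (mem_minimalIMAP.mp h).1
      by_cases hbu : b = u
      · subst b
        have hav : a ≠ v := by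
          intro h'; subst a
          exact absurd (lt_trans hord hs.h3) (lt_irrefl _)
        have hau : a ≠ u := fun h' => absurd (h' ▸ hord) (lt_irrefl _)
        exact (hs.ord_u hau hav).mpr hord
      · by_cases hbv : b = v
        · subst b
          have hau : a ≠ u := fun h' => hne' (by rw [h'])
          have hav : a ≠ v := fun h' => absurd (h' ▸ hord) (lt_irrefl _)
          exact (hs.ord_v hau hav).mpr hord
        · exact (hs.ord_gen hbu hbv).mpr hord
    · have h1 : a = v := congrArg Prod.fst h
      have h2 : b = u := congrArg Prod.snd h
      subst h1; subst h2
      rw [hs.h1u, hs.h1v]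
      exact hs.h3
  refine ⟨mkDAG (fun a b => ((minimalIMAP C α).Arrow a b ∧ (a, b) ≠ (u, v)) ∨ (a, b) = (v, u))
      (fun a => (β.symm a : ℕ)) (fun a b h => by exact_mod_cast hlin a b h), ?_, ?_⟩
  · intro a b
    simp [mkDAG, DAG.Arrow]
  · intro a b h
    simp only [mkDAG, DAG.Arrow, Finset.mem_filter] at h
    exact hlin a b (by simpa [DAG.Arrow] using h)

end PermInfra
section Chickering
variable {p : ℕ}

/-- Chickering's lemma: among the arrows of `G` reversed in `H`, the one with
minimal head and then maximal tail (w.r.t. a topological order of `G`) is covered. -/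
theorem chickering {G H : DAG p} {σ : Equiv.Perm (Fin p)} (hlin : IsLinExt G σ)
    (hskelGH : ∀ a b, a ≠ b → G.Adj a b → H.Adj a b)
    (hskelHG : ∀ a b, a ≠ b → H.Adj a b → G.Adj a b)
    (hvGH : ∀ a b c, G.Arrow a b → G.Arrow c b → a ≠ c → ¬ G.Adj a c →
      H.Arrow a b ∧ H.Arrow c b)
    (hvHG : ∀ a b c, H.Arrow a b → H.Arrow c b → a ≠ c → ¬ H.Adj a c →
      G.Arrow a b ∧ G.Arrow c b)
    (hD : (G.arrows.filter fun e => (e.2, e.1) ∈ H.arrows).Nonempty) :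
    ∃ u v, G.Arrow u v ∧ H.Arrow v u ∧
      (∀ x, G.Arrow x u ↔ (G.Arrow x v ∧ x ≠ u)) := by
  classical
  set D := G.arrows.filter fun e => (e.2, e.1) ∈ H.arrows with hDdef
  have memD : ∀ e : Fin p × Fin p, e ∈ D ↔ (G.Arrow e.1 e.2 ∧ H.Arrow e.2 e.1) := by
    intro e
    rw [hDdef, Finset.mem_filter]
    exact Iff.rfl
  have hM : (D.image fun e => σ.symm e.2).Nonempty := hD.image _
  set m := (D.image fun e => σ.symm e.2).min' hM with hm
  set D2 := D.filter (fun e => σ.symm e.2 = m) with hD2def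
  have hD2ne : D2.Nonempty := by
    have h := (D.image fun e => σ.symm e.2).min'_mem hM
    rw [Finset.mem_image] at h
    obtain ⟨e, he, heq⟩ := h
    exact ⟨e, by rw [hD2def, Finset.mem_filter]; exact ⟨he, heq⟩⟩
  have hM2 : (D2.image fun e => σ.symm e.1).Nonempty := hD2ne.image _
  set m2 := (D2.image fun e => σ.symm e.1).max' hM2 with hm2
  obtain ⟨e, heD2, heq2⟩ : ∃ e ∈ D2, σ.symm e.1 = m2 := by
    have h := (D2.image fun e => σ.symm e.1).max'_mem hM2
    rw [Finset.mem_image] at h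
    obtain ⟨e, he, heq⟩ := h
    exact ⟨e, he, heq⟩
  have hmin : ∀ a b, G.Arrow a b → H.Arrow b a → m ≤ σ.symm b := by
    intro a b h1 h2
    refine Finset.min'_le _ _ ?_
    rw [Finset.mem_image]
    exact ⟨(a, b), (memD _).mpr ⟨h1, h2⟩, rfl⟩
  have hmax : ∀ a b, G.Arrow a b → H.Arrow b a → σ.symm b = m → σ.symm a ≤ m2 := by
    intro a b h1 h2 h3
    refine Finset.le_max' _ _ ?_
    rw [Finset.mem_image]
    refine ⟨(a, b), ?_, rfl⟩
    rw [hD2def, Finset.mem_filter]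
    exact ⟨(memD _).mpr ⟨h1, h2⟩, h3⟩
  obtain ⟨heD, hevm⟩ : e ∈ D ∧ σ.symm e.2 = m := by
    rw [hD2def, Finset.mem_filter] at heD2; exact heD2
  obtain ⟨u, v⟩ := e
  simp only at heq2 hevm
  obtain ⟨hGuv, hHvu⟩ := (memD (u, v)).mp heD
  simp only at hGuv hHvu
  refine ⟨u, v, hGuv, hHvu, ?_⟩
  have hposuv : σ.symm u < σ.symm v := hlin _ _ hGuv
  intro x
  constructor
  · intro hxu
    have hxune : x ≠ u := fun h => DAG.arrow_irrefl G u (h ▸ hxu)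
    have hposxu : σ.symm x < σ.symm u := hlin _ _ hxu
    have hHxu : H.Arrow x u := by
      rcases hskelGH x u hxune hxu.adj with h | h
      · exact h
      · -- u → x in H : the pair (x, u) would be reversed with smaller head
        exfalso
        have := hmin x u hxu h
        rw [hevm] at hposuv
        exact absurd (lt_of_le_of_lt this hposuv) (lt_irrefl _)
    have hxv : x ≠ v := fun h => absurd ((h ▸ hposxu).trans hposuv) (lt_irrefl _)
    have hadjGxv : G.Adj x v := by
      by_contra hnadj
      have hnadjH : ¬ H.Adj x v := fun h => hnadj (hskelHG x v hxv h)
      have := hvHG x u v hHxu hHvu hxv hnadjH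
      exact DAG.arrow_asymm hGuv this.2
    refine ⟨?_, hxune⟩
    rcases hadjGxv with h | h
    · exact h
    · exact absurd (hlin _ _ h) (not_lt.mpr (le_of_lt (hposxu.trans hposuv)))
  · rintro ⟨hxv, hxune⟩
    have hposxv : σ.symm x < σ.symm v := hlin _ _ hxv
    have hxv' : x ≠ v := fun h => DAG.arrow_irrefl G v (h ▸ hxv)
    have hadjGxu : G.Adj x u := by
      by_contra hnadj
      have := hvGH x v u hxv hGuv hxune hnadj
      exact DAG.arrow_asymm hHvu this.2
    rcases hadjGxu with h | h
    · exact h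
    · -- u → x in G : derive a contradiction
      exfalso
      have hposux : σ.symm u < σ.symm x := hlin _ _ h
      have hxune' : u ≠ x := fun h' => absurd (h' ▸ hposux) (lt_irrefl _)
      rcases hskelGH x v hxv' hxv.adj with hHxv | hHvx
      · -- x → v in H; consider the H-orientation of (u, x)
        rcases hskelGH u x hxune' h.adj with hHux | hHxu
        · -- cycle v → u → x → v in H
          exact H.acyclic v (Relation.TransGen.head hHvu
            (Relation.TransGen.head hHux (Relation.TransGen.single hHxv)))
        · -- (u, x) reversed in H with head x, but pos x < pos v = m
          have := hmin u x h hHxu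
          rw [hevm] at hposxv
          exact absurd (lt_of_le_of_lt this hposxv) (lt_irrefl _)
      · -- (x, v) reversed in H : tail x beats maximal tail u
        have := hmax x v hxv hHvx hevm
        rw [heq2] at hposux
        exact absurd (lt_of_lt_of_le hposux this) (lt_irrefl _)

end Chickering
section Main
variable {p : ℕ} {C : Set (CIRel p)}

theorem covered_of_hpa {G : DAG p} {u v : Fin p} (harr : G.Arrow u v)
    (hpa : ∀ x, G.Arrow x u ↔ (G.Arrow x v ∧ x ≠ u)) : G.Covered u v := by
  refine ⟨harr, ?_⟩
  ext x
  rw [DAG.mem_parents, Finset.mem_erase, DAG.mem_parents, hpa x]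
  tauto

theorem exists_reversed {σ τ : Equiv.Perm (Fin p)}
    (hME : MarkovEquiv (minimalIMAP C σ) (minimalIMAP C τ))
    (hne : minimalIMAP C σ ≠ minimalIMAP C τ) :
    ((minimalIMAP C σ).arrows.filter fun e =>
      (e.2, e.1) ∈ (minimalIMAP C τ).arrows).Nonempty := by
  have hME' : MarkovEquiv (minimalIMAP C τ) (minimalIMAP C σ) := Eq.symm hME
  by_contra hempty
  rw [Finset.not_nonempty_iff_eq_empty] at hempty
  apply hne
  apply DAG.ext'
  have hrev : ∀ x y : Fin p, (minimalIMAP C σ).Arrow x y →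
      ¬ (minimalIMAP C τ).Arrow y x := by
    intro x y h1 h2
    have hmem : (x, y) ∈ (minimalIMAP C σ).arrows.filter fun e =>
        (e.2, e.1) ∈ (minimalIMAP C τ).arrows := Finset.mem_filter.mpr ⟨h1, h2⟩
    rw [hempty] at hmem
    exact absurd hmem (Finset.notMem_empty _)
  ext ⟨a, b⟩
  constructor
  · intro h
    have h' : (minimalIMAP C σ).Arrow a b := h
    have hab : a ≠ b := fun he => DAG.arrow_irrefl _ b (he ▸ h')
    rcases adj_of_ME hME (isLinExt_minimalIMAP C τ) h'.adj hab with h2 | h2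
    · exact h2
    · exact absurd h2 (hrev a b h')
  · intro h
    have h' : (minimalIMAP C τ).Arrow a b := h
    have hab : a ≠ b := fun he => DAG.arrow_irrefl _ b (he ▸ h')
    rcases adj_of_ME hME' (isLinExt_minimalIMAP C σ) h'.adj hab with h2 | h2
    · exact h2
    · exact absurd h' (hrev b a h2)

theorem main_loop (hC : Graphoid C) (π τ : Equiv.Perm (Fin p))
    (hME : MarkovEquiv (minimalIMAP C π) (minimalIMAP C τ))
    (hmin : MECsMinimal C π) :
    ∀ (n : ℕ) (σ : Equiv.Perm (Fin p)),
      ((minimalIMAP C σ).arrows.filter fun e =>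
        (e.2, e.1) ∈ (minimalIMAP C τ).arrows).card ≤ n →
      MarkovEquiv (minimalIMAP C σ) (minimalIMAP C π) →
      ∃ (s : List (Equiv.Perm (Fin p))) (ρ : Equiv.Perm (Fin p)),
        s.head? = some σ ∧ s.getLast? = some ρ ∧
        minimalIMAP C ρ = minimalIMAP C τ ∧ WeaklyDecreasingSeq C s := by
  intro n
  induction n with
  | zero =>
    intro σ hcard hMEσπ
    by_cases hEq : minimalIMAP C σ = minimalIMAP C τ
    · exact ⟨[σ], σ, rfl, rfl, hEq, List.isChain_singleton σ⟩
    · exfalso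
      have hMEστ : MarkovEquiv (minimalIMAP C σ) (minimalIMAP C τ) := hMEσπ.trans hME
      have := Finset.card_pos.mpr (exists_reversed hMEστ hEq)
      omega
  | succ n ih =>
    intro σ hcard hMEσπ
    by_cases hEq : minimalIMAP C σ = minimalIMAP C τ
    · exact ⟨[σ], σ, rfl, rfl, hEq, List.isChain_singleton σ⟩
    have hMEστ : MarkovEquiv (minimalIMAP C σ) (minimalIMAP C τ) := hMEσπ.trans hME
    have hMEτσ : MarkovEquiv (minimalIMAP C τ) (minimalIMAP C σ) := Eq.symm hMEστ
    -- Chickering: get a covered arrow of `G_σ` reversed in `G_τ`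
    obtain ⟨u, v, hGuv, hHvu, hpa⟩ := chickering (isLinExt_minimalIMAP C σ)
      (fun a b hne h => adj_of_ME hMEστ (isLinExt_minimalIMAP C τ) h hne)
      (fun a b hne h => adj_of_ME hMEτσ (isLinExt_minimalIMAP C σ) h hne)
      (fun a b c h1 h2 hne hnadj =>
        vstructure_of_ME hMEστ (isLinExt_minimalIMAP C σ) (isLinExt_minimalIMAP C τ)
          h1 h2 hne hnadj)
      (fun a b c h1 h2 hne hnadj =>
        vstructure_of_ME hMEτσ (isLinExt_minimalIMAP C τ) (isLinExt_minimalIMAP C σ)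
          h1 h2 hne hnadj)
      (exists_reversed hMEστ hEq)
    -- make u, v consecutive without changing the I-MAP
    obtain ⟨α, hα, hordα, hconsα⟩ := moveDown hC ((σ.symm v : ℕ)) σ u v (by omega) hGuv hpa
    set β := swapPos α u v with hβdef
    have hs : SwapHyp α β u v := swapHyp_swapPos hordα hconsα
    have harrα : (minimalIMAP C α).Arrow u v := by rw [hα]; exact hGuv
    have hpaα : ∀ x, (minimalIMAP C α).Arrow x u ↔
        ((minimalIMAP C α).Arrow x v ∧ x ≠ u) := by rw [hα]; exact hpa
    obtain ⟨G', hG'iff, hG'lin⟩ := flip_exists (C := C) hs harrα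
    have hCIα : CIof (minimalIMAP C α) = CIof G' := flip_CIof harrα hpaα hG'iff
    have hMEG'π : MarkovEquiv G' (minimalIMAP C π) := by
      show CIof G' = CIof (minimalIMAP C π)
      rw [← hCIα, hα]
      exact hMEσπ
    have hMEαπ : MarkovEquiv (minimalIMAP C α) (minimalIMAP C π) := by
      show CIof _ = _
      rw [hα]; exact hMEσπ
    have hadjβ := hmin.2 G' hMEG'π β hG'lin
    -- the arrows into u and v are preserved, via MEC-s-minimality
    have h₁ : ∀ x, (minimalIMAP C α).Arrow x v → x ≠ u → (x, v, condSet β x v) ∉ C := by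
      intro x hxv hxu
      have hxv' : x ≠ v := fun h => DAG.arrow_irrefl _ v (h ▸ hxv)
      have hadjπ : (minimalIMAP C π).Adj x v :=
        adj_of_ME hMEαπ (isLinExt_minimalIMAP C π) hxv.adj hxv'
      have hordβ : β.symm x < β.symm v := (hs.ord_v hxu hxv').mpr (mem_minimalIMAP.mp hxv).1
      rcases hadjβ x v hadjπ with h | h
      · exact (mem_minimalIMAP.mp h).2
      · exact absurd ((mem_minimalIMAP.mp h).1.trans hordβ) (lt_irrefl _)
    have h₂ : ∀ x, (minimalIMAP C α).Arrow x u → (x, u, condSet β x u) ∉ C := by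
      intro x hxu
      have hxu' : x ≠ u := fun h => DAG.arrow_irrefl _ u (h ▸ hxu)
      have hxv' : x ≠ v := fun h => DAG.arrow_asymm harrα (h ▸ hxu)
      have hadjπ : (minimalIMAP C π).Adj x u :=
        adj_of_ME hMEαπ (isLinExt_minimalIMAP C π) hxu.adj hxu'
      have hordβ : β.symm x < β.symm u := (hs.ord_u hxu' hxv').mpr (mem_minimalIMAP.mp hxu).1
      rcases hadjβ x u hadjπ with h | h
      · exact (mem_minimalIMAP.mp h).2
      · exact absurd ((mem_minimalIMAP.mp h).1.trans hordβ) (lt_irrefl _)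
    have hβiff := cs_swap hC hs harrα hpaα h₁ h₂
    have hGβG' : minimalIMAP C β = G' := by
      apply DAG.ext'
      ext ⟨a, b⟩
      exact (hβiff a b).trans (hG'iff a b).symm
    have hβiffσ : ∀ a b, (minimalIMAP C β).Arrow a b ↔
        (((minimalIMAP C σ).Arrow a b ∧ (a, b) ≠ (u, v)) ∨ (a, b) = (v, u)) := by
      rw [← hα]; exact hβiff
    -- Markov equivalence is preserved
    have hMEβπ : MarkovEquiv (minimalIMAP C β) (minimalIMAP C π) := by
      show CIof _ = _
      rw [hGβG', ← hCIα, hα]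
      exact hMEσπ
    -- the arrow sets
    have harrβ : (minimalIMAP C β).arrows
        = insert (v, u) ((minimalIMAP C σ).arrows.erase (u, v)) := by
      ext ⟨a, b⟩
      rw [Finset.mem_insert, Finset.mem_erase]
      constructor
      · intro h
        rcases (hβiffσ a b).mp h with ⟨h1, h2⟩ | h1
        · exact Or.inr ⟨h2, h1⟩
        · exact Or.inl h1
      · rintro (h1 | ⟨h2, h1⟩)
        · exact (hβiffσ a b).mpr (Or.inr h1)
        · exact (hβiffσ a b).mpr (Or.inl ⟨h1, h2⟩)
    have hnum : (minimalIMAP C β).numArrows = (minimalIMAP C σ).numArrows := by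
      rw [DAG.numArrows, DAG.numArrows, harrβ, Finset.card_insert_of_notMem, 
        Finset.card_erase_of_mem hGuv]
      · have hpos : 0 < (minimalIMAP C σ).arrows.card := Finset.card_pos.mpr ⟨(u, v), hGuv⟩
        omega
      · intro hmem
        rw [Finset.mem_erase] at hmem
        exact DAG.arrow_asymm hGuv hmem.2
    -- the disagreement count decreases
    have hDβ : ((minimalIMAP C β).arrows.filter fun e =>
          (e.2, e.1) ∈ (minimalIMAP C τ).arrows)
        = (((minimalIMAP C σ).arrows.filter fun e =>
          (e.2, e.1) ∈ (minimalIMAP C τ).arrows)).erase (u, v) := by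
      ext ⟨a, b⟩
      rw [Finset.mem_erase, Finset.mem_filter, Finset.mem_filter, harrβ,
        Finset.mem_insert, Finset.mem_erase]
      constructor
      · rintro ⟨h1 | ⟨hne2, h1⟩, h2⟩
        · exfalso
          have ha : a = v := congrArg Prod.fst h1
          have hb : b = u := congrArg Prod.snd h1
          subst ha; subst hb
          exact DAG.arrow_asymm hHvu h2
        · exact ⟨hne2, h1, h2⟩
      · rintro ⟨hne2, h1, h2⟩
        exact ⟨Or.inr ⟨hne2, h1⟩, h2⟩
    have hcardβ : ((minimalIMAP C β).arrows.filter fun e =>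
        (e.2, e.1) ∈ (minimalIMAP C τ).arrows).card ≤ n := by
      rw [hDβ, Finset.card_erase_of_mem (Finset.mem_filter.mpr ⟨hGuv, hHvu⟩)]
      have hpos : 0 < ((minimalIMAP C σ).arrows.filter fun e =>
          (e.2, e.1) ∈ (minimalIMAP C τ).arrows).card :=
        Finset.card_pos.mpr ⟨(u, v), Finset.mem_filter.mpr ⟨hGuv, hHvu⟩⟩
      omega
    -- recurse
    obtain ⟨s', ρ, hh, hl, heqτ, hwds⟩ := ih β hcardβ hMEβπ
    match s', hh with
    | (b₀ :: t), hh =>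
      have hb₀ : b₀ = β := by simpa using hh
      subst hb₀
      refine ⟨σ :: β :: t, ρ, rfl, ?_, heqτ, ?_⟩
      · rw [List.getLast?_cons_cons]
        exact hl
      · rw [WeaklyDecreasingSeq]
        show List.IsChain _ _
        rw [List.isChain_cons_cons]
        refine ⟨⟨⟨u, v, covered_of_hpa hGuv hpa, ?_, ?_⟩, le_of_eq hnum⟩, hwds⟩
        · rw [hs.h1v, hs.h1u]
          exact hs.h3
        · intro x y hxy hne2
          apply hG'lin
          refine (hG'iff x y).mpr (Or.inl ⟨?_, hne2⟩)
          rw [hα]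
          exact hxy

end Main
set_option maxHeartbeats 2000000 in
/-- Theorem 11(i): if `C` is a graphoid, `G_π` and `G_τ` are
Markov equivalent minimal I-MAPs w.r.t. `C`, and `G_π` is MEC-s-minimal, then
there is a weakly decreasing sequence of covered arrow reversals from `G_π`
to `G_τ`. -/
theorem weakly_decreasing_walk_within_MEC
    (p : ℕ) (C : Set (CIRel p)) (hC : Graphoid C)
    (π τ : Equiv.Perm (Fin p))
    (hME : MarkovEquiv (minimalIMAP C π) (minimalIMAP C τ))
    (hmin : MECsMinimal C π) :
    ∃ (s : List (Equiv.Perm (Fin p))) (ρ : Equiv.Perm (Fin p)),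
      s.head? = some π ∧ s.getLast? = some ρ ∧
      minimalIMAP C ρ = minimalIMAP C τ ∧
      WeaklyDecreasingSeq C s := by
  exact main_loop hC π τ hME hmin
    (((minimalIMAP C π).arrows.filter fun e =>
      (e.2, e.1) ∈ (minimalIMAP C τ).arrows).card)
    π (le_refl _) rfl

end GSP
end

section
/- Lemma 28, non-adjacent case (marginalization of undirected graphs induced by d-connection): Let G be a DAG on [p], S ⊆ [p], k ∈ S, and let i, j ∈ S\{k} be distinct. Suppose i and k are d-separated given S\{i,k} in G. Then i and j are d-connected given S\{i,j} in G if and only if i and j are d-connected given S\{i,j,k} in G. -/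
open scoped Classical

namespace GSP
section Aux

variable {G : DAG p} {A : Finset (Fin p)}

lemma arrow_asymm (G : DAG p) {a b : Fin p} (h : G.Arrow a b) (h' : G.Arrow b a) : False :=
  G.acyclic a (Relation.TransGen.head h (Relation.TransGen.single h'))

/-- Canonical walks from `y` to `i`: internal colliders in `A`, internal
non-colliders outside `A`. `b` records whether the first edge points into `y`. -/
inductive Can (G : DAG p) (A : Finset (Fin p)) (i : Fin p) : Fin p → Bool → Prop
  | base1 {y} : G.Arrow y i → Can G A i y false
  | base2 {y} : G.Arrow i y → Can G A i y true
  | out {y b z} : Can G A i y b → G.Arrow y z → y ∉ A → Can G A i z true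
  | coll {y z} : Can G A i y true → G.Arrow z y → y ∈ A → Can G A i z false
  | nonc {y z} : Can G A i y false → G.Arrow z y → y ∉ A → Can G A i z false

/-- Active walks from `y` to `i`: internal colliders have a descendant in `A`. -/
inductive Act (G : DAG p) (A : Finset (Fin p)) (i : Fin p) : Fin p → Bool → Prop
  | base1 {y} : G.Arrow y i → Act G A i y false
  | base2 {y} : G.Arrow i y → Act G A i y true
  | out {y b z} : Act G A i y b → G.Arrow y z → y ∉ A → Act G A i z true
  | coll {y z} : Act G A i y true → G.Arrow z y → (∃ d ∈ A, G.Desc y d) → Act G A i z false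
  | nonc {y z} : Act G A i y false → G.Arrow z y → y ∉ A → Act G A i z false

lemma can_down {i d : Fin p} (hdA : d ∈ A) :
    ∀ {u : Fin p}, G.Desc u d → Can G A i u true → u ∈ A ∨ Can G A i u false := by
  intro u hd
  induction hd using Relation.ReflTransGen.head_induction_on with
  | refl => exact fun _ => Or.inl hdA
  | head harr _ ih =>
    intro h
    rename_i a c _
    by_cases haA : a ∈ A
    · exact Or.inl haA
    · have hc : Can G A i c true := Can.out h harr haA
      by_cases hcA : c ∈ A
      · exact Or.inr (Can.coll hc harr hcA)
      · rcases ih hc with h' | h'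
        · exact absurd h' hcA
        · exact Or.inr (Can.nonc h' harr hcA)

lemma act_to_can {i y : Fin p} {b : Bool} (h : Act G A i y b) : Can G A i y b := by
  induction h with
  | base1 h => exact Can.base1 h
  | base2 h => exact Can.base2 h
  | out _ ha hA ih => exact Can.out ih ha hA
  | nonc _ ha hA ih => exact Can.nonc ih ha hA
  | coll _ ha hd ih =>
    rename_i y z _
    by_cases hyA : y ∈ A
    · exact Can.coll ih ha hyA
    · obtain ⟨d, hdA, hdesc⟩ := hd
      rcases can_down hdA hdesc ih with h' | h'
      · exact absurd h' hyA
      · exact Can.nonc h' ha hyA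

/-- The surgery lemma: transfer a canonical walk between conditioning sets. -/
lemma surgery {src tgt mid : Finset (Fin p)} {i j k : Fin p}
    (Hin : ∀ y, y ∈ src → y ≠ k → y ∈ tgt ∧ y ∈ mid)
    (Hout : ∀ y, y ∉ src → y ≠ k → y ≠ j → y ∉ tgt ∧ y ∉ mid)
    (Hcontra : ∀ b, ¬ Can G mid i k b) :
    ∀ {y : Fin p} {b : Bool}, Can G src i y b →
      (Can G tgt i y b ∧ Can G mid i y b) ∨ (∃ b', Can G tgt i j b') := by
  intro y b h
  induction h with
  | base1 h => exact Or.inl ⟨Can.base1 h, Can.base1 h⟩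
  | base2 h => exact Or.inl ⟨Can.base2 h, Can.base2 h⟩
  | out _ ha hA ih =>
    rename_i y b z _
    rcases ih with ⟨ct, cm⟩ | hr
    · by_cases hyk : y = k
      · exact absurd (hyk ▸ cm) (Hcontra _)
      · by_cases hyj : y = j
        · exact Or.inr ⟨_, hyj ▸ ct⟩
        · obtain ⟨h1, h2⟩ := Hout y hA hyk hyj
          exact Or.inl ⟨Can.out ct ha h1, Can.out cm ha h2⟩
    · exact Or.inr hr
  | coll _ ha hA ih =>
    rename_i y z _
    rcases ih with ⟨ct, cm⟩ | hr
    · by_cases hyk : y = k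
      · exact absurd (hyk ▸ cm) (Hcontra _)
      · obtain ⟨h1, h2⟩ := Hin y hA hyk
        exact Or.inl ⟨Can.coll ct ha h1, Can.coll cm ha h2⟩
    · exact Or.inr hr
  | nonc _ ha hA ih =>
    rename_i y z _
    rcases ih with ⟨ct, cm⟩ | hr
    · by_cases hyk : y = k
      · exact absurd (hyk ▸ cm) (Hcontra _)
      · by_cases hyj : y = j
        · exact Or.inr ⟨_, hyj ▸ ct⟩
        · obtain ⟨h1, h2⟩ := Hout y hA hyk hyj
          exact Or.inl ⟨Can.nonc ct ha h1, Can.nonc cm ha h2⟩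
    · exact Or.inr hr

lemma dconnwalk_tail {x : Fin p} {l : List (Fin p)} (h : G.DConnWalk A (x :: l)) :
    G.DConnWalk A l := by
  obtain ⟨hch, hcond⟩ := h
  refine ⟨hch.tail, ?_⟩
  intro m hm h2
  obtain ⟨n, rfl⟩ : ∃ n, m = n + 1 := ⟨m - 1, by omega⟩
  have h2' : (n + 1) + 1 + 1 < (x :: l).length := by simpa using by omega
  have := hcond (n + 1 + 1) (by omega) h2'
  simpa using this

lemma cons_walk {x y : Fin p} {l : List (Fin p)}
    (h : G.DConnWalk A (y :: l)) (hadj : G.Adj x y)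
    (hc : ∀ z, l.head? = some z →
      (G.Collider x y z → ∃ d ∈ A, G.Desc y d) ∧ (¬ G.Collider x y z → y ∉ A)) :
    G.DConnWalk A (x :: y :: l) := by
  obtain ⟨hch, hcond⟩ := h
  refine ⟨List.isChain_cons_cons.2 ⟨hadj, hch⟩, ?_⟩
  intro m hm h2
  rcases Nat.lt_or_ge m 2 with hm2 | hm2
  · obtain rfl : m = 1 := by omega
    have hl : 0 < l.length := by simp at h2; omega
    obtain ⟨z, l', rfl⟩ : ∃ z l', l = z :: l' := by
      cases l with
      | nil => simp at hl
      | cons a t => exact ⟨a, t, rfl⟩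
    simpa using hc z rfl
  · obtain ⟨n, rfl⟩ : ∃ n, m = n + 2 := ⟨m - 2, by omega⟩
    have h2' : (n + 1) + 1 < (y :: l).length := by simp at h2 ⊢; omega
    have := hcond (n + 1) (by omega) h2'
    simpa using this

lemma can_to_walk {i y : Fin p} {b : Bool} (h : Can G A i y b) :
    ∃ l, G.DConnWalk A (y :: l) ∧ (y :: l).getLast? = some i ∧
      ∃ z l', l = z :: l' ∧ (b = true → G.Arrow z y) ∧ (b = false → G.Arrow y z) := by
  induction h with
  | base1 h =>
    exact ⟨[i], ⟨List.isChain_pair.2 (Or.inl h), by intro m hm h2; simp at h2; omega⟩,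
      by simp, i, [], rfl, by simp, fun _ => h⟩
  | base2 h =>
    exact ⟨[i], ⟨List.isChain_pair.2 (Or.inr h), by intro m hm h2; simp at h2; omega⟩,
      by simp, i, [], rfl, fun _ => h, by simp⟩
  | out _ ha hA ih =>
    rename_i y b z _
    obtain ⟨l, hw, hlast, w, l', rfl, _, _⟩ := ih
    refine ⟨y :: w :: l', cons_walk hw (Or.inr ha) ?_, by simpa using hlast,
      y, w :: l', rfl, fun _ => ha, by simp⟩
    intro u hu
    obtain rfl : w = u := by simpa using hu
    constructor
    · intro hcol
      exact absurd hcol.1 (fun h' => arrow_asymm G ha h')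
    · intro _; exact hA
  | coll _ ha hA ih =>
    rename_i y z _
    obtain ⟨l, hw, hlast, w, l', rfl, hb, _⟩ := ih
    refine ⟨y :: w :: l', cons_walk hw (Or.inl ha) ?_, by simpa using hlast,
      y, w :: l', rfl, by simp, fun _ => ha⟩
    intro u hu
    obtain rfl : w = u := by simpa using hu
    constructor
    · intro _
      exact ⟨y, hA, Relation.ReflTransGen.refl⟩
    · intro hncol
      exact absurd ⟨ha, hb rfl⟩ hncol
  | nonc _ ha hA ih =>
    rename_i y z _
    obtain ⟨l, hw, hlast, w, l', rfl, _, hb⟩ := ih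
    refine ⟨y :: w :: l', cons_walk hw (Or.inl ha) ?_, by simpa using hlast,
      y, w :: l', rfl, by simp, fun _ => ha⟩
    intro u hu
    obtain rfl : w = u := by simpa using hu
    constructor
    · intro hcol
      exact absurd hcol.2 (fun h' => arrow_asymm G (hb rfl) h')
    · intro _; exact hA

lemma can_to_dconn {i y : Fin p} {b : Bool} (h : Can G A i y b) : G.DConn y i A := by
  obtain ⟨l, hw, hlast, _⟩ := can_to_walk h
  exact ⟨y :: l, by simp, hlast, hw⟩

set_option maxHeartbeats 1000000 in
lemma dconn_symm {a b : Fin p} (h : G.DConn a b A) : G.DConn b a A := by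
  obtain ⟨l, h1, h2, hch, hcond⟩ := h
  refine ⟨l.reverse, by rwa [List.head?_reverse], by rwa [List.getLast?_reverse], ?_, ?_⟩
  · refine List.isChain_reverse.2 ?_
    exact hch.imp fun a b hab => hab.symm
  · intro m hm h2'
    have hlen : l.reverse.length = l.length := List.length_reverse
    have hml : m + 1 < l.length := by omega
    have hn1 : 1 ≤ l.length - 1 - m := by omega
    have hn2 : (l.length - 1 - m) + 1 < l.length := by omega
    have key := hcond (l.length - 1 - m) hn1 hn2
    simp only [List.get_eq_getElem] at key ⊢
    have e1 : l.reverse[m - 1]'(by simp; omega) = l[(l.length - 1 - m) + 1]'(by omega) := by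
      rw [List.getElem_reverse]
      congr 1
      omega
    have e2 : l.reverse[m]'(by simp; omega) = l[l.length - 1 - m]'(by omega) := by
      rw [List.getElem_reverse]
    have e3 : l.reverse[m + 1]'h2' = l[(l.length - 1 - m) - 1]'(by omega) :=
      (List.getElem_reverse h2').trans (by first | rfl | (congr 1; omega))
    rw [e1, e2, e3]
    exact ⟨fun hcol => key.1 ⟨hcol.2, hcol.1⟩, fun hncol => key.2 fun hc => hncol ⟨hc.2, hc.1⟩⟩

lemma list_to_act {i : Fin p} :
    ∀ (rest : List (Fin p)) (z w : Fin p), G.DConnWalk A (z :: w :: rest) →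
      (z :: w :: rest).getLast? = some i →
      ∃ b, Act G A i z b ∧ (b = true → G.Arrow w z) ∧ (b = false → G.Arrow z w) := by
  intro rest
  induction rest with
  | nil =>
    intro z w h hlast
    have hwi : w = i := by simpa using hlast
    have hadj : G.Adj z w := (List.isChain_cons_cons.1 h.1).1
    rcases hadj with h' | h'
    · exact ⟨false, Act.base1 (hwi ▸ h'), by simp, fun _ => h'⟩
    · exact ⟨true, Act.base2 (hwi ▸ h'), fun _ => h', by simp⟩
  | cons w' rest' ih =>
    intro z w h hlast
    have hadj : G.Adj z w := (List.isChain_cons_cons.1 h.1).1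
    by_cases hwi : w = i
    · rcases hadj with h' | h'
      · exact ⟨false, Act.base1 (hwi ▸ h'), by simp, fun _ => h'⟩
      · exact ⟨true, Act.base2 (hwi ▸ h'), fun _ => h', by simp⟩
    · obtain ⟨b', hact, hbt, hbf⟩ := ih w w' (dconnwalk_tail h)
        (by simpa using hlast)
      have hcond := h.2 1 (by omega) (by simp)
      simp only [List.get_eq_getElem] at hcond
      have hc1 : (G.Collider z w w' → ∃ d ∈ A, G.Desc w d) ∧
          (¬ G.Collider z w w' → w ∉ A) := by simpa using hcond
      rcases hadj with h' | h'
      · -- Arrow z w : edge into w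
        cases b' with
        | true =>
          have hwz : G.Arrow w' w := hbt rfl
          have hd := hc1.1 ⟨h', hwz⟩
          exact ⟨false, Act.coll hact h' hd, by simp, fun _ => h'⟩
        | false =>
          have hww' : G.Arrow w w' := hbf rfl
          have hnA : w ∉ A := hc1.2 fun hc => arrow_asymm G hww' hc.2
          exact ⟨false, Act.nonc hact h' hnA, by simp, fun _ => h'⟩
      · -- Arrow w z : edge out of w
        have hnA : w ∉ A := hc1.2 fun hc => arrow_asymm G h' hc.1
        exact ⟨true, Act.out hact h' hnA, fun _ => h', by simp⟩

lemma dconn_to_can {x i : Fin p} (hne : x ≠ i) (h : G.DConn x i A) :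
    ∃ b, Can G A i x b := by
  obtain ⟨l, h1, h2, hw⟩ := h
  cases l with
  | nil => simp at h1
  | cons a t =>
    have hax : a = x := by simpa using h1
    cases t with
    | nil =>
      have : a = i := by simpa using h2
      exact absurd (hax ▸ this) hne
    | cons c rest =>
      obtain ⟨b, hact, _⟩ := list_to_act rest a c hw h2
      exact ⟨b, act_to_can (hax ▸ hact)⟩

end Aux


/-- Lemma 28, non-adjacent case: let `S ⊆ [p]`, `k ∈ S`, and
let `i, j ∈ S \ {k}` be distinct. If `i` and `k` are d-separated given
`S \ {i,k}`, then `i` and `j` are d-connected given `S \ {i,j}` iff they are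
d-connected given `S \ {i,j,k}`. -/
theorem marginalization_nonadjacent_case
    (p : ℕ) (G : DAG p) (S : Finset (Fin p)) (k : Fin p) (hk : k ∈ S)
    (i j : Fin p) (hi : i ∈ S) (hj : j ∈ S)
    (hik : i ≠ k) (hjk : j ≠ k) (hij : i ≠ j)
    (hsep : G.DSep i k ((S.erase i).erase k)) :
    G.DConn i j ((S.erase i).erase j) ↔
      G.DConn i j (((S.erase i).erase j).erase k) := by
  have hsep' : ∀ b, ¬ Can G ((S.erase i).erase k) i k b := fun b hb =>
    hsep (dconn_symm (can_to_dconn hb))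
  have Hin1 : ∀ y, y ∈ (S.erase i).erase j → y ≠ k →
      y ∈ ((S.erase i).erase j).erase k ∧ y ∈ (S.erase i).erase k := by
    intro y hy hyk
    simp only [Finset.mem_erase] at hy ⊢
    exact ⟨⟨hyk, hy⟩, hyk, hy.2⟩
  have Hout1 : ∀ y, y ∉ (S.erase i).erase j → y ≠ k → y ≠ j →
      y ∉ ((S.erase i).erase j).erase k ∧ y ∉ (S.erase i).erase k := by
    intro y hy hyk hyj
    simp only [Finset.mem_erase] at hy ⊢
    constructor
    · intro ⟨_, h⟩; exact hy h
    · intro ⟨_, h⟩; exact hy ⟨hyj, h⟩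
  have Hin2 : ∀ y, y ∈ ((S.erase i).erase j).erase k → y ≠ k →
      y ∈ (S.erase i).erase j ∧ y ∈ (S.erase i).erase k := by
    intro y hy _
    simp only [Finset.mem_erase] at hy ⊢
    exact ⟨hy.2, hy.1, hy.2.2⟩
  have Hout2 : ∀ y, y ∉ ((S.erase i).erase j).erase k → y ≠ k → y ≠ j →
      y ∉ (S.erase i).erase j ∧ y ∉ (S.erase i).erase k := by
    intro y hy hyk hyj
    simp only [Finset.mem_erase] at hy ⊢
    constructor
    · intro h; exact hy ⟨hyk, h⟩
    · intro ⟨_, h⟩; exact hy ⟨hyk, hyj, h⟩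
  constructor
  · intro h
    obtain ⟨b, hcan⟩ := dconn_to_can (Ne.symm hij) (dconn_symm h)
    rcases surgery Hin1 Hout1 hsep' hcan with ⟨ct, _⟩ | ⟨b', ct⟩
    · exact dconn_symm (can_to_dconn ct)
    · exact dconn_symm (can_to_dconn ct)
  · intro h
    obtain ⟨b, hcan⟩ := dconn_to_can (Ne.symm hij) (dconn_symm h)
    rcases surgery Hin2 Hout2 hsep' hcan with ⟨ct, _⟩ | ⟨b', ct⟩
    · exact dconn_symm (can_to_dconn ct)
    · exact dconn_symm (can_to_dconn ct)


end GSP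
end

section
/- Lemma 28, fill-in case: Let G be a DAG on [p], S ⊆ [p], k ∈ S, and let i, j ∈ S\{k} be distinct. Suppose i and k are d-connected given S\{i,k} in G, j and k are d-connected given S\{j,k} in G, and i and j are d-separated given S\{i,j} in G. Then i and j are d-connected given S\{i,j,k} in G. -/
open scoped Classical

namespace GSP

section Aux

variable {p : ℕ}

/-- Triple condition with separate witness set `W₁` (for colliders) and
blocking set `W₂` (for non-colliders). -/
def TW (G : DAG p) (W₁ W₂ : Finset (Fin p)) (a b c : Fin p) : Prop :=
  (G.Collider a b c → ∃ d ∈ W₁, G.Desc b d) ∧ (¬ G.Collider a b c → b ∉ W₂)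

/-- Chain of triple conditions along a list. -/
def TC (P : Fin p → Fin p → Fin p → Prop) : List (Fin p) → Prop
  | a :: b :: c :: rest => P a b c ∧ TC P (b :: c :: rest)
  | _ => True

lemma TC_mono {P Q : Fin p → Fin p → Fin p → Prop}
    (h : ∀ a b c, P a b c → Q a b c) : ∀ l, TC P l → TC Q l
  | [], _ => trivial
  | [_], _ => trivial
  | [_, _], _ => trivial
  | a :: b :: c :: t, hl => ⟨h a b c hl.1, TC_mono h (b :: c :: t) hl.2⟩

lemma TC_tail {P : Fin p → Fin p → Fin p → Prop} : ∀ (a : Fin p) (l : List (Fin p)),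
    TC P (a :: l) → TC P l
  | _, [], _ => trivial
  | _, [_], _ => trivial
  | _, _ :: _ :: _, h => h.2

lemma TC_cons {P : Fin p → Fin p → Fin p → Prop} (x : Fin p) (l : List (Fin p)) :
    TC P (x :: l) ↔ TC P l ∧ ∀ y z, l[0]? = some y → l[1]? = some z → P x y z := by
  match l with
  | [] => simp [TC]
  | [a] => simp [TC]
  | a :: b :: t =>
    show P x a b ∧ TC P (a :: b :: t) ↔ _
    constructor
    · rintro ⟨h1, h2⟩
      refine ⟨h2, fun y z hy hz => ?_⟩
      simp at hy hz
      subst hy; subst hz; exact h1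
    · rintro ⟨h2, h1⟩
      exact ⟨h1 a b (by simp) (by simp), h2⟩

lemma head2_eq (u : List (Fin p)) (a b : Fin p) (v w : List (Fin p)) :
    ((u ++ a :: b :: v)[0]? = (u ++ a :: b :: w)[0]?) ∧
      ((u ++ a :: b :: v)[1]? = (u ++ a :: b :: w)[1]?) := by
  match u with
  | [] => simp
  | [x] => simp
  | x :: y :: t => simp

lemma TC_append_left {P : Fin p → Fin p → Fin p → Prop} :
    ∀ (l₁ l₂ : List (Fin p)), TC P (l₁ ++ l₂) → TC P l₁
  | [], _, _ => trivial
  | [_], _, _ => trivial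
  | [_, _], _, _ => trivial
  | a :: b :: c :: t, l₂, h => ⟨h.1, TC_append_left (b :: c :: t) l₂ h.2⟩

lemma TC_glue {P : Fin p → Fin p → Fin p → Prop} (a b : Fin p) :
    ∀ (u v : List (Fin p)),
      TC P (u ++ [a, b]) → TC P (a :: b :: v) → TC P (u ++ a :: b :: v) := by
  intro u
  induction u with
  | nil => intro v _ h2; exact h2
  | cons x u ih =>
    intro v h1 h2
    rw [List.cons_append] at h1 ⊢
    rw [TC_cons] at h1 ⊢
    refine ⟨ih v h1.1 h2, fun y z hy hz => ?_⟩
    refine h1.2 y z ?_ ?_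
    · rw [show ([a, b] : List (Fin p)) = a :: b :: [] from rfl,
        (head2_eq u a b [] v).1]; exact hy
    · rw [show ([a, b] : List (Fin p)) = a :: b :: [] from rfl,
        (head2_eq u a b [] v).2]; exact hz

lemma TC_dirpath (G : DAG p) (W₁ W₂ : Finset (Fin p)) :
    ∀ (a : Fin p) (q : List (Fin p)), q.Chain' G.Arrow →
      (∀ y ∈ q.dropLast, y ∉ W₂) → TC (TW G W₁ W₂) (a :: q)
  | _, [], _, _ => trivial
  | _, [_], _, _ => trivial
  | a, b :: c :: t, hc, hm => by
    have harr : G.Arrow b c := (List.isChain_cons_cons.mp hc).1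
    have hnc : ¬ G.Collider a b c := fun h =>
      G.acyclic b (Relation.TransGen.head harr (Relation.TransGen.single h.2))
    refine ⟨⟨fun h => absurd h hnc, fun _ => hm b (by simp)⟩, ?_⟩
    exact TC_dirpath G W₁ W₂ b (c :: t) (List.isChain_cons_cons.mp hc).2
      (fun y hy => hm y (by simp at hy ⊢; tauto))

lemma exists_dirpath (G : DAG p) {b j : Fin p} (h : G.Desc b j) :
    ∃ q : List (Fin p), q.head? = some b ∧ q.getLast? = some j ∧
      q.Chain' G.Arrow ∧ ∀ y ∈ q, G.Desc b y := by
  induction h using Relation.ReflTransGen.head_induction_on with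
  | refl =>
    refine ⟨[j], rfl, rfl, List.isChain_singleton j, fun y hy => ?_⟩
    simp at hy
    subst hy
    exact Relation.ReflTransGen.refl
  | head harr _ ih =>
    rename_i x c _
    obtain ⟨q, hq1, hq2, hq3, hq4⟩ := ih
    obtain ⟨q', rfl⟩ : ∃ q', q = c :: q' :=
      ⟨q.tail, List.eq_cons_of_mem_head? (by rw [hq1]; rfl)⟩
    refine ⟨x :: c :: q', rfl, by rw [List.getLast?_cons_cons]; exact hq2, ?_, ?_⟩
    · exact List.isChain_cons_cons.mpr ⟨harr, hq3⟩
    · intro y hy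
      rcases List.mem_cons.mp hy with rfl | hy
      · exact Relation.ReflTransGen.refl
      · exact Relation.ReflTransGen.head harr (hq4 y hy)

lemma TC_and_mem {P : Fin p → Fin p → Fin p → Prop} :
    ∀ (l : List (Fin p)), TC P l → TC (fun a b c => P a b c ∧ b ∈ l.dropLast) l
  | [], _ => trivial
  | [_], _ => trivial
  | [_, _], _ => trivial
  | a :: b :: c :: t, h => by
    refine ⟨⟨h.1, by simp⟩, ?_⟩
    refine TC_mono (fun x y z hx => ⟨hx.1, ?_⟩) _ (TC_and_mem (b :: c :: t) h.2)
    simp at hx ⊢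
    tauto

lemma TC_split (P Q : Fin p → Fin p → Fin p → Prop) :
    ∀ l : List (Fin p), TC P l → TC Q l ∨
      ∃ u a b c v, l = u ++ a :: b :: c :: v ∧ TC Q (u ++ [a, b]) ∧
        P a b c ∧ ¬ Q a b c
  | [], _ => Or.inl trivial
  | [_], _ => Or.inl trivial
  | [_, _], _ => Or.inl trivial
  | a :: b :: c :: t, h => by
    by_cases hq : Q a b c
    · rcases TC_split P Q (b :: c :: t) h.2 with h' | ⟨u, a', b', c', v, heq, hu, hp, hnq⟩
      · exact Or.inl ⟨hq, h'⟩
      · refine Or.inr ⟨a :: u, a', b', c', v, by rw [List.cons_append, ← heq], ?_, hp, hnq⟩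
        rw [List.cons_append, TC_cons]
        refine ⟨hu, fun y z hy hz => ?_⟩
        have e0 : (u ++ a' :: b' :: c' :: v)[0]? = some y := by
          rw [(head2_eq u a' b' (c' :: v) []).1]
          simpa using hy
        have e1 : (u ++ a' :: b' :: c' :: v)[1]? = some z := by
          rw [(head2_eq u a' b' (c' :: v) []).2]
          simpa using hz
        rw [← heq] at e0 e1
        simp at e0 e1
        subst e0; subst e1
        exact hq
    · exact Or.inr ⟨[], a, b, c, t, rfl, trivial, h.1, hq⟩

lemma TC_snoc {P : Fin p → Fin p → Fin p → Prop} :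
    ∀ (l : List (Fin p)) (x : Fin p), TC P l →
      (∀ u y z, l = u ++ [y, z] → P y z x) → TC P (l ++ [x])
  | [], _, _, _ => trivial
  | [_], _, _, _ => trivial
  | [a, b], x, _, h2 => ⟨h2 [] a b rfl, trivial⟩
  | a :: b :: c :: t, x, h, h2 => by
    refine ⟨h.1, ?_⟩
    exact TC_snoc (b :: c :: t) x h.2 fun u y z e => h2 (a :: u) y z (by rw [List.cons_append, ← e])

lemma TC_reverse {P : Fin p → Fin p → Fin p → Prop} :
    ∀ (l : List (Fin p)), TC P l → TC (fun a b c => P c b a) l.reverse := by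
  intro l
  induction l with
  | nil => intro _; trivial
  | cons a t ih =>
    intro h
    rw [List.reverse_cons]
    refine TC_snoc _ _ (ih (TC_tail a t h)) ?_
    intro u y z e
    have ht : t = z :: y :: u.reverse := by
      have := congrArg List.reverse e
      simpa using this
    rw [ht] at h
    exact h.1

lemma TC_get (P : Fin p → Fin p → Fin p → Prop) :
    ∀ (l : List (Fin p)),
      TC P l ↔ ∀ (t : ℕ) (h : t + 2 < l.length),
        P (l.get ⟨t, by omega⟩) (l.get ⟨t + 1, by omega⟩) (l.get ⟨t + 2, h⟩) := by
  intro l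
  induction l with
  | nil => exact ⟨fun _ t h => by simp at h, fun _ => trivial⟩
  | cons a t ih =>
    cases t with
    | nil => exact ⟨fun _ t h => by simp at h, fun _ => trivial⟩
    | cons b t =>
      cases t with
      | nil => exact ⟨fun _ t h => by simp only [List.length_cons, List.length_nil] at h; omega, fun _ => trivial⟩
      | cons c rest =>
        constructor
        · rintro ⟨h1, h2⟩ t ht
          match t with
          | 0 => exact h1
          | t + 1 =>
            have := ih.mp h2 t (by simp only [List.length_cons] at ht ⊢; omega)
            simpa using this
        · intro h
          refine ⟨?_, ih.mpr fun t ht => ?_⟩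
          · have := h 0 (by simp)
            simpa using this
          · have := h (t + 1) (by simp only [List.length_cons] at ht ⊢; omega)
            simpa using this

lemma dconnWalk_iff (G : DAG p) (T : Finset (Fin p)) (l : List (Fin p)) :
    G.DConnWalk T l ↔ l.Chain' G.Adj ∧ TC (TW G T T) l := by
  rw [DAG.DConnWalk, TC_get]
  constructor
  · rintro ⟨hc, h⟩
    exact ⟨hc, fun t ht => h (t + 1) (by omega) ht⟩
  · rintro ⟨hc, h⟩
    refine ⟨hc, fun m hm h2 => ?_⟩
    obtain ⟨t, rfl⟩ : ∃ t, m = t + 1 := ⟨m - 1, by omega⟩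
    exact h t h2

lemma head?_append_cons (u : List (Fin p)) (a : Fin p) (v w : List (Fin p)) :
    (u ++ a :: v).head? = (u ++ a :: w).head? := by cases u <;> simp

lemma exists_first_split {k : Fin p} :
    ∀ {l : List (Fin p)}, k ∈ l → ∃ s t, l = s ++ k :: t ∧ k ∉ s := by
  intro l hl
  induction l with
  | nil => simp at hl
  | cons a t ih =>
    by_cases hak : a = k
    · exact ⟨[], t, by rw [hak, List.nil_append], List.not_mem_nil⟩
    · have hkt : k ∈ t := by
        rcases List.mem_cons.mp hl with h | h
        · exact absurd h.symm hak
        · exact h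
      obtain ⟨s, t', heq, hns⟩ := ih hkt
      refine ⟨a :: s, t', by rw [List.cons_append, heq], ?_⟩
      intro h
      rcases List.mem_cons.mp h with h | h
      · exact hak h.symm
      · exact hns h

lemma mem_of_getLast?' {l : List (Fin p)} {k : Fin p} (h : l.getLast? = some k) :
    k ∈ l := by
  obtain ⟨hne, hx⟩ := List.mem_getLast?_eq_getLast (show k ∈ l.getLast? by rw [h]; rfl)
  rw [hx]
  exact List.getLast_mem hne

lemma TW_symm (G : DAG p) (W₁ W₂ : Finset (Fin p)) (a b c : Fin p)
    (h : TW G W₁ W₂ c b a) : TW G W₁ W₂ a b c :=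
  ⟨fun hc => h.1 ⟨hc.2, hc.1⟩, fun hn => h.2 fun hc => hn ⟨hc.2, hc.1⟩⟩

lemma reverse_walk (G : DAG p) {P : Fin p → Fin p → Fin p → Prop}
    (hsym : ∀ a b c, P c b a → P a b c) {l : List (Fin p)}
    (hc : l.Chain' G.Adj) (ht : TC P l) :
    l.reverse.Chain' G.Adj ∧ TC P l.reverse := by
  constructor
  · rw [List.Chain', List.isChain_reverse]
    exact hc.imp fun a b hab => hab.symm
  · exact TC_mono hsym _ (TC_reverse l ht)

lemma walk_or_desc (G : DAG p) (T W : Finset (Fin p)) (x tgt : Fin p)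
    (l : List (Fin p)) (hh : l.head? = some x)
    (hc : l.Chain' G.Adj) (ht : TC (TW G W W) l)
    (hTW : ∀ y, y ∈ T → y ∈ W) (hWT : ∀ d, d ∈ W → d ∉ T → d = tgt) :
    TC (TW G T W) l ∨
      ∃ l' : List (Fin p), l'.head? = some x ∧ l'.getLast? = some tgt ∧
        l'.Chain' G.Adj ∧ TC (TW G T T) l' := by
  rcases TC_split (TW G W W) (TW G T W) l ht with h | ⟨u, a, b, c, v, heq, hu, hp, hnq⟩
  · exact Or.inl h
  · right
    have h1 : ¬ (G.Collider a b c → ∃ d ∈ T, G.Desc b d) := fun h => hnq ⟨h, hp.2⟩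
    push_neg at h1
    obtain ⟨hcol, hbad⟩ := h1
    obtain ⟨d, hdW, hdb⟩ := hp.1 hcol
    have hdt : d = tgt := hWT d hdW (fun hdT => hbad d hdT hdb)
    subst hdt
    obtain ⟨q, hq1, hq2, hq3, hq4⟩ := exists_dirpath G hdb
    obtain ⟨q', rfl⟩ : ∃ q', q = b :: q' :=
      ⟨q.tail, List.eq_cons_of_mem_head? (by rw [hq1]; rfl)⟩
    refine ⟨u ++ a :: b :: q', ?_, ?_, ?_, ?_⟩
    · rw [← hh, heq]
      exact head?_append_cons u a (b :: q') (b :: c :: v)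
    · rw [show u ++ a :: b :: q' = (u ++ [a]) ++ (b :: q') by simp]
      rw [List.getLast?_append, hq2]
      rfl
    · rw [show u ++ a :: b :: q' = (u ++ [a]) ++ (b :: q') by simp]
      rw [List.Chain', List.isChain_append]
      refine ⟨hc.prefix ⟨b :: c :: v, by rw [heq]; simp⟩,
        hq3.imp (fun _ _ h => Or.inl h), ?_⟩
      intro x' hx y' hy
      rw [List.getLast?_concat] at hx
      simp at hx hy
      subst hx; subst hy
      exact Or.inl hcol.1
    · refine TC_glue a b u q' ?_ ?_
      · exact TC_mono (fun a' b' c' hq =>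
          ⟨hq.1, fun hn hbT => hq.2 hn (hTW _ hbT)⟩) _ hu
      · exact TC_dirpath G T T a (b :: q') hq3
          (fun y hy hyT => hbad y hyT (hq4 y ((List.dropLast_sublist _).subset hy)))

end Aux

/-- Lemma 28, fill-in case: let `S ⊆ [p]`, `k ∈ S`, and let
`i, j ∈ S \ {k}` be distinct. If `i` and `k` are d-connected given `S \ {i,k}`,
`j` and `k` are d-connected given `S \ {j,k}`, and `i` and `j` are d-separated
given `S \ {i,j}`, then `i` and `j` are d-connected given `S \ {i,j,k}`. -/
theorem marginalization_fill_in_case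
    (p : ℕ) (G : DAG p) (S : Finset (Fin p)) (k : Fin p) (hk : k ∈ S)
    (i j : Fin p) (hi : i ∈ S) (hj : j ∈ S)
    (hik : i ≠ k) (hjk : j ≠ k) (hij : i ≠ j)
    (hconik : G.DConn i k ((S.erase i).erase k))
    (hconjk : G.DConn j k ((S.erase j).erase k))
    (hsepij : G.DSep i j ((S.erase i).erase j)) :
    G.DConn i j (((S.erase i).erase j).erase k) := by
  classical
  obtain ⟨l₁, h1h, h1l, h1w⟩ := hconik
  obtain ⟨l₂, h2h, h2l, h2w⟩ := hconjk
  rw [dconnWalk_iff] at h1w h2w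
  obtain ⟨h1c, h1t⟩ := h1w
  obtain ⟨h2c, h2t⟩ := h2w
  -- abbreviations (kept unfolded syntactically)
  -- T := ((S.erase i).erase j).erase k, A := (S.erase i).erase k,
  -- B := (S.erase j).erase k, C := (S.erase i).erase j
  have hTA : ∀ y, y ∈ ((S.erase i).erase j).erase k → y ∈ (S.erase i).erase k := by
    intro y hy; simp only [Finset.mem_erase] at *; tauto
  have hTB : ∀ y, y ∈ ((S.erase i).erase j).erase k → y ∈ (S.erase j).erase k := by
    intro y hy; simp only [Finset.mem_erase] at *; tauto
  have hTC : ∀ y, y ∈ ((S.erase i).erase j).erase k → y ∈ (S.erase i).erase j := by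
    intro y hy; simp only [Finset.mem_erase] at *; tauto
  have hAj : ∀ d, d ∈ (S.erase i).erase k → d ∉ ((S.erase i).erase j).erase k → d = j := by
    intro d hd hnd; simp only [Finset.mem_erase] at *; tauto
  have hBi : ∀ d, d ∈ (S.erase j).erase k → d ∉ ((S.erase i).erase j).erase k → d = i := by
    intro d hd hnd; simp only [Finset.mem_erase] at *; tauto
  have hkT : k ∉ ((S.erase i).erase j).erase k := by simp
  have hkC : k ∈ (S.erase i).erase j := by
    simp only [Finset.mem_erase]
    exact ⟨Ne.symm hjk, Ne.symm hik, hk⟩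
  have hAkC : ∀ y, y ∉ (S.erase i).erase k → y ≠ k → y ∉ (S.erase i).erase j := by
    intro y hy hyk; simp only [Finset.mem_erase] at *; tauto
  have hBkC : ∀ y, y ∉ (S.erase j).erase k → y ≠ k → y ∉ (S.erase i).erase j := by
    intro y hy hyk; simp only [Finset.mem_erase] at *; tauto
  -- case (b): some collider on the i–k walk escapes only to j
  rcases walk_or_desc G (((S.erase i).erase j).erase k) ((S.erase i).erase k) i j
      l₁ h1h h1c h1t hTA hAj with ht₁ | ⟨l', ha, hb, hc', ht'⟩
  swap
  · exact ⟨l', ha, hb, (dconnWalk_iff G _ l').mpr ⟨hc', ht'⟩⟩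
  -- case (b'): some collider on the j–k walk escapes only to i
  rcases walk_or_desc G (((S.erase i).erase j).erase k) ((S.erase j).erase k) j i
      l₂ h2h h2c h2t hTB hBi with ht₂ | ⟨l', ha, hb, hc', ht'⟩
  swap
  · obtain ⟨hcr, htr⟩ := reverse_walk G
      (fun a b c h => TW_symm G _ _ a b c h) hc' ht'
    refine ⟨l'.reverse, ?_, ?_, (dconnWalk_iff G _ l'.reverse).mpr ⟨hcr, htr⟩⟩
    · rw [List.head?_reverse, hb]
    · rw [← List.head?_reverse, List.reverse_reverse, ha]
  -- case (a): all colliders on both walks have witnesses in T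
  -- truncate both walks at the first occurrence of k
  obtain ⟨s₁, t₁, rfl, hks₁⟩ := exists_first_split (mem_of_getLast?' h1l)
  obtain ⟨s₂, t₂, rfl, hks₂⟩ := exists_first_split (mem_of_getLast?' h2l)
  have hW1c : (s₁ ++ [k]).Chain' G.Adj := h1c.prefix ⟨t₁, by simp⟩
  have hW2c : (s₂ ++ [k]).Chain' G.Adj := h2c.prefix ⟨t₂, by simp⟩
  have hW1t : TC (fun a b c =>
      TW G (((S.erase i).erase j).erase k) ((S.erase i).erase k) a b c ∧ b ∈ s₁)
      (s₁ ++ [k]) := by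
    have := TC_and_mem (s₁ ++ [k]) (TC_append_left (s₁ ++ [k]) t₁ (by simpa using ht₁))
    simpa [List.dropLast_concat] using this
  have hW2t : TC (fun a b c =>
      TW G (((S.erase i).erase j).erase k) ((S.erase j).erase k) a b c ∧ b ∈ s₂)
      (s₂ ++ [k]) := by
    have := TC_and_mem (s₂ ++ [k]) (TC_append_left (s₂ ++ [k]) t₂ (by simpa using ht₂))
    simpa [List.dropLast_concat] using this
  have hW1h : (s₁ ++ [k]).head? = some i := by
    rw [← h1h]; exact head?_append_cons s₁ k [] t₁
  have hW2h : (s₂ ++ [k]).head? = some j := by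
    rw [← h2h]; exact head?_append_cons s₂ k [] t₂
  -- reverse the second walk
  obtain ⟨hrc, hrt⟩ := reverse_walk G
    (fun a b c h => ⟨TW_symm G _ _ a b c h.1, h.2⟩) hW2c hW2t
  have hrh : (s₂ ++ [k]).reverse.head? = some k := by
    rw [List.head?_reverse, List.getLast?_concat]
  have hrl : (s₂ ++ [k]).reverse.getLast? = some j := by
    rw [← List.head?_reverse, List.reverse_reverse, hW2h]
  -- decompose the two walks
  have hs₁ne : s₁ ≠ [] := by
    rintro rfl
    simp at hW1h
    exact hik hW1h.symm
  have hs₂ne : s₂ ≠ [] := by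
    rintro rfl
    simp at hW2h
    exact hjk hW2h.symm
  rcases List.eq_nil_or_concat s₁ with rfl | ⟨u, a, hs₁⟩
  · exact absurd rfl hs₁ne
  rw [List.concat_eq_append] at hs₁
  subst hs₁
  obtain ⟨b₂, v, hs₂⟩ : ∃ b₂ v, s₂.reverse = b₂ :: v := by
    rcases hrev : s₂.reverse with _ | ⟨b₂, v⟩
    · exact absurd (by simpa using congrArg List.reverse hrev) hs₂ne
    · exact ⟨b₂, v, rfl⟩
  have hr : (s₂ ++ [k]).reverse = k :: b₂ :: v := by
    rw [List.reverse_append, hs₂]; rfl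
  rw [hr] at hrc hrt hrh hrl
  -- assemble the concatenated walk L = u ++ a :: k :: b₂ :: v
  have hadj : G.Adj a k := by
    obtain ⟨-, -, hseam⟩ := List.isChain_append.mp hW1c
    refine hseam a ?_ k rfl
    rw [List.getLast?_concat]; rfl
  have hLc : ((u ++ [a]) ++ (k :: b₂ :: v)).Chain' G.Adj := by
    rw [List.Chain', List.isChain_append]
    refine ⟨(List.isChain_append.mp hW1c).1, hrc, ?_⟩
    intro x hx y hy
    simp at hy
    subst hy
    rw [List.getLast?_concat] at hx
    simp at hx
    subst hx
    exact hadj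
  have hLh : ((u ++ [a]) ++ (k :: b₂ :: v)).head? = some i := by
    rw [List.append_assoc, List.singleton_append,
      head?_append_cons u a (k :: b₂ :: v) [k]]
    simpa using hW1h
  have hLl : ((u ++ [a]) ++ (k :: b₂ :: v)).getLast? = some j := by
    rw [List.getLast?_append, hrl]
    rfl
  have hLeq : (u ++ [a]) ++ (k :: b₂ :: v) = u ++ a :: k :: b₂ :: v := by simp
  by_cases hcol : G.Collider a k b₂
  · -- junction is a collider: contradiction with d-separation of i and j
    exfalso
    apply hsepij
    refine ⟨(u ++ [a]) ++ (k :: b₂ :: v), hLh, hLl, (dconnWalk_iff G _ _).mpr ⟨hLc, ?_⟩⟩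
    rw [hLeq]
    refine TC_glue a k u (b₂ :: v) ?_ ?_
    · have := TC_mono (fun x y z (h : _ ∧ _) =>
        (⟨fun hc => (h.1.1 hc).imp fun d hd => ⟨hTC d hd.1, hd.2⟩,
          fun hn hyC => hAkC y (h.1.2 hn) (fun hyk => hks₁ (hyk ▸ h.2)) hyC⟩ :
          TW G ((S.erase i).erase j) ((S.erase i).erase j) x y z)) _ hW1t
      simp only [List.append_assoc, List.cons_append, List.nil_append] at this ⊢; exact this
    · refine ⟨⟨fun _ => ⟨k, hkC, Relation.ReflTransGen.refl⟩, fun hn => absurd hcol hn⟩, ?_⟩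
      refine TC_mono (fun x y z h => ?_) _ hrt
      refine ⟨fun hc => ?_, fun hn hyC => ?_⟩
      · obtain ⟨d, hd, hdd⟩ := h.1.1 hc
        exact ⟨d, hTC d hd, hdd⟩
      · exact hBkC y (h.1.2 hn) (fun hyk => hks₂ (hyk ▸ h.2)) hyC
  · -- junction is a non-collider: this is the desired walk
    refine ⟨(u ++ [a]) ++ (k :: b₂ :: v), hLh, hLl, (dconnWalk_iff G _ _).mpr ⟨hLc, ?_⟩⟩
    rw [hLeq]
    refine TC_glue a k u (b₂ :: v) ?_ ?_
    · have := TC_mono (fun x y z (h : _ ∧ _) =>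
        (⟨h.1.1, fun hn hyT => h.1.2 hn (hTA y hyT)⟩ :
          TW G (((S.erase i).erase j).erase k) (((S.erase i).erase j).erase k) x y z)) _ hW1t
      simp only [List.append_assoc, List.cons_append, List.nil_append] at this ⊢; exact this
    · refine ⟨⟨fun hc => absurd hc hcol, fun _ => hkT⟩, ?_⟩
      refine TC_mono (fun x y z h => ?_) _ hrt
      exact ⟨h.1.1, fun hn hyT => h.1.2 hn (hTB y hyT)⟩

end GSP
end
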